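/- arXiv:2207.04954 — 7 statements merged into one kernel-verified Lean document; each statement's English description precedes it below -/
import Mathlib

section
/- For every n ≥ 2, every natural number k ≥ 1, and every sequence of simple graphs G_0, G_1, …, G_U on a fixed vertex set of n vertices such that G_0 is the empty graph and, for each 1 ≤ t ≤ U, G_t is obtained from G_{t−1} by inserting or deleting a single edge, there exist simple graphs H_0, H_1, …, H_U on the same vertex set and an absolute constant C > 0 such that for every t: H_t is a subgraph of G_t, H_t is a (2k−1)-spanner of G_t, H_t has at most C · n^{1+1/k} · log n edges (as a real-number inequality), and the total recourse ∑_{t=1}^{U} #(E(H_t) Δ E(H_{t−1})) is at most C · (U+1) · log n. -/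
open SimpleGraph

set_option linter.unusedSectionVars false
set_option maxHeartbeats 1000000

variable {V : Type} [Fintype V]

/-- `S` has at most one path between any two vertices among paths of total length `≤ 2k`. -/
def USP (k : ℕ) (S : SimpleGraph V) : Prop :=
  ∀ (u w : V) (p q : S.Walk u w), p.IsPath → q.IsPath → p.length + q.length ≤ 2 * k →
    p.edges = q.edges

lemma usp_mono {k : ℕ} {S S' : SimpleGraph V} (h : S' ≤ S) (hU : USP k S) : USP k S' := by
  intro u w p q hp hq hlen
  have := hU u w (p.mapLe h) (q.mapLe h)
    ((Walk.mapLe_isPath h).mpr hp) ((Walk.mapLe_isPath h).mpr hq)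
    (by simpa [Walk.mapLe, Walk.length_map] using hlen)
  have hmap : ∀ (x y : V) (r : S'.Walk x y), (r.mapLe h).edges = r.edges := by
    intro x y r
    simp only [Walk.mapLe, Walk.edges_map]
    have : (Sym2.map ⇑(SimpleGraph.Hom.ofLE h)) = id := Sym2.map_id' 
    rw [this, List.map_id]
  rwa [hmap, hmap] at this

lemma usp_bot (k : ℕ) : USP k (⊥ : SimpleGraph V) := by
  intro u w p q hp hq hlen
  cases p with
  | nil => cases q with
    | nil => rfl
    | cons h q => exact absurd h (by simp)
  | cons h p => exact absurd h (by simp)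

/-- if every edge of `G` is covered within distance `c` in `H`, then `H` is a `c`-spanner. -/
lemma spanner_of_cover {H G : SimpleGraph V} {c : ℕ} (hc : 1 ≤ c)
    (hcov : ∀ u v : V, G.Adj u v → H.edist u v ≤ (c : ℕ∞)) (u v : V) :
    H.edist u v ≤ (c : ℕ∞) * G.edist u v := by
  rcases eq_or_ne (G.edist u v) ⊤ with htop | hne
  · rw [htop, ENat.mul_top (by exact_mod_cast Nat.one_le_iff_ne_zero.mp hc)]
    exact le_top
  · obtain ⟨p, hp⟩ := SimpleGraph.exists_walk_of_edist_ne_top hne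
    have key : ∀ (x y : V) (w : G.Walk x y), H.edist x y ≤ (c : ℕ∞) * w.length := by
      intro x y w
      induction w with
      | nil => simp
      | cons h w ih =>
        rename_i a b d
        calc H.edist a d ≤ H.edist a b + H.edist b d := SimpleGraph.edist_triangle
        _ ≤ (c : ℕ∞) + (c : ℕ∞) * w.length := add_le_add (hcov _ _ h) ih
        _ = (c : ℕ∞) * (w.length + 1) := by ring
        _ = (c : ℕ∞) * ((Walk.cons h w).length) := by
            rw [Walk.length_cons]; push_cast; ring
    calc H.edist u v ≤ (c : ℕ∞) * p.length := key u v p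
    _ = (c : ℕ∞) * G.edist u v := by rw [hp]

lemma fromEdgeSet_le' {G : SimpleGraph V} {s : Set (Sym2 V)} (h : s ⊆ G.edgeSet) :
    SimpleGraph.fromEdgeSet s ≤ G := by
  intro a b hab
  rw [SimpleGraph.fromEdgeSet_adj] at hab
  exact (G.mem_edgeSet).mp (h hab.1)

lemma edgeSet_fromEdgeSet_of_subset {G : SimpleGraph V} {s : Set (Sym2 V)} (h : s ⊆ G.edgeSet) :
    (SimpleGraph.fromEdgeSet s).edgeSet = s := by
  rw [SimpleGraph.edgeSet_fromEdgeSet]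
  ext e
  simp only [Set.mem_diff, Set.mem_setOf_eq, and_iff_left_iff_imp]
  exact fun he => G.not_isDiag_of_mem_edgeSet (h he)

lemma exists_decomp {S : SimpleGraph V} {x y a b : V} (p : S.Walk x y) (hp : p.IsPath)
    (hab : s(a, b) ∈ p.edges) :
    ∃ (w1 w2 : V), s(w1, w2) = s(a, b) ∧
      ∃ (p1 : S.Walk x w1) (p2 : S.Walk w2 y),
        p.edges = p1.edges ++ s(a, b) :: p2.edges ∧
        p1.IsPath ∧ p2.IsPath ∧
        p.length = p1.length + 1 + p2.length ∧
        p1.support ⊆ p.support := by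
  induction p with
  | nil => simp at hab
  | cons h q ih =>
    rename_i c d e
    rw [Walk.edges_cons, List.mem_cons] at hab
    rcases hab with heq | hmem
    · refine ⟨c, d, heq.symm, Walk.nil, q, ?_, Walk.IsPath.nil, hp.of_cons, by rw [Walk.length_cons, Walk.length_nil]; omega, ?_⟩
      · simp only [Walk.edges_cons, Walk.edges_nil, List.nil_append, ← heq]
      · intro z hz
        simp only [Walk.support_nil, List.mem_singleton] at hz
        simp [hz]
    · obtain ⟨w1, w2, hw, p1, p2, hedges, hp1, hp2, hlen, hsupp⟩ := ih hp.of_cons hmem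
      have hc : c ∉ p1.support := fun hcs =>
        ((Walk.cons_isPath_iff h q).mp hp).2 (hsupp hcs)
      refine ⟨w1, w2, hw, Walk.cons h p1, p2, ?_, hp1.cons hc, hp2, ?_, ?_⟩
      · rw [Walk.edges_cons, hedges]; simp
      · simp [Walk.length_cons, hlen]; omega
      · intro z hz
        rw [Walk.support_cons, List.mem_cons] at hz
        rcases hz with rfl | hz
        · simp
        · simp [Walk.support_cons, hsupp hz]

lemma cover_of_maximal {k : ℕ} (hk : 1 ≤ k) {G S : SimpleGraph V} (hle : S ≤ G) (hU : USP k S)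
    (hmax : ∀ S', S' ≤ G → USP k S' → S ≤ S' → S' = S) :
    ∀ u v : V, G.Adj u v → S.edist u v ≤ ((2 * k - 1 : ℕ) : ℕ∞) := by
  intro u v huv
  have hk1 : (1 : ℕ) ≤ 2 * k - 1 := by omega
  by_cases hSuv : S.Adj u v
  · calc S.edist u v ≤ 1 := by
          rw [SimpleGraph.edist_eq_one_iff_adj.mpr hSuv]
        _ ≤ ((2 * k - 1 : ℕ) : ℕ∞) := by exact_mod_cast hk1
  · set e : Sym2 V := s(u, v) with he
    set S' : SimpleGraph V := S ⊔ SimpleGraph.fromEdgeSet {e} with hS'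
    have hS'G : S' ≤ G := by
      apply sup_le hle
      apply fromEdgeSet_le'
      intro f hf
      rw [Set.mem_singleton_iff] at hf
      rw [hf, he]
      exact huv
    have hS'adj : S'.Adj u v := by
      apply Or.inr
      rw [SimpleGraph.fromEdgeSet_adj]
      exact ⟨rfl, huv.ne⟩
    have hnU : ¬ USP k S' := by
      intro hU'
      rw [hmax S' hS'G hU' le_sup_left] at hS'adj
      exact hSuv hS'adj
    rw [USP] at hnU
    push_neg at hnU
    obtain ⟨x, y, p, q, hp, hq, hlen, hpq⟩ := hnU
    -- any edge of S' other than e is an edge of S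
    have hedge : ∀ f : Sym2 V, f ∈ S'.edgeSet → f ≠ e → f ∈ S.edgeSet := by
      intro f hf hfe
      rw [hS', SimpleGraph.edgeSet_sup, SimpleGraph.edgeSet_fromEdgeSet] at hf
      rcases hf with hf | hf
      · exact hf
      · exact absurd hf.1 hfe
    -- helper: from an S-walk between the two "endpoints" of e of length ≤ 2k-1, conclude
    have finish : ∀ (w1 w2 : V), s(w1, w2) = e → ∀ (r : S.Walk w1 w2),
        r.length ≤ 2 * k - 1 → S.edist u v ≤ ((2 * k - 1 : ℕ) : ℕ∞) := by
      intro w1 w2 hw r hr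
      have hEd : S.edist w1 w2 ≤ ((2 * k - 1 : ℕ) : ℕ∞) := by
        calc S.edist w1 w2 ≤ (r.length : ℕ∞) := SimpleGraph.edist_le r
        _ ≤ ((2 * k - 1 : ℕ) : ℕ∞) := by exact_mod_cast hr
      rw [he] at hw
      rw [Sym2.eq_iff] at hw
      rcases hw with ⟨rfl, rfl⟩ | ⟨rfl, rfl⟩
      · exact hEd
      · rwa [SimpleGraph.edist_comm]
    -- membership of edges of S'-walks into S
    have hedgeW : ∀ {c d : V} (r : S'.Walk c d), e ∉ r.edges → ∀ f ∈ r.edges, f ∈ S.edgeSet := by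
      intro c d r hre f hf
      exact hedge f (r.edges_subset_edgeSet hf) (fun h' => hre (h' ▸ hf))
    have hsplit : ∀ {l1 l2 : List (Sym2 V)}, (l1 ++ e :: l2).Nodup → e ∉ l1 ∧ e ∉ l2 := by
      intro l1 l2 hnd
      rcases List.nodup_append'.mp hnd with ⟨_, h2, hdisj⟩
      exact ⟨fun hel => hdisj hel (by simp), (List.nodup_cons.mp h2).1⟩
    -- asymmetric case: p contains e, q does not
    have aux : ∀ (x y : V) (p q : S'.Walk x y), p.IsPath → q.IsPath →
        p.length + q.length ≤ 2 * k → e ∈ p.edges → e ∉ q.edges →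
        S.edist u v ≤ ((2 * k - 1 : ℕ) : ℕ∞) := by
      intro x y p q hp hq hlen hpe hqe
      obtain ⟨w1, w2, hw, p1, p2, hEp, hp1, hp2, hLp, _⟩ := exists_decomp p hp hpe
      have hnd := hp.isTrail.edges_nodup
      rw [hEp] at hnd
      obtain ⟨hep1, hep2⟩ := hsplit hnd
      set r : S'.Walk w1 w2 := (p1.reverse.append q).append p2.reverse with hr
      have hre : e ∉ r.edges := by
        rw [hr]
        simp only [Walk.edges_append, Walk.edges_reverse, List.mem_append, List.mem_reverse]
        rintro ((h | h) | h)
        exacts [hep1 h, hqe h, hep2 h]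
      have hrS := hedgeW r hre
      apply finish w1 w2 hw (r.transfer S hrS)
      rw [Walk.length_transfer, hr]
      simp only [Walk.length_append, Walk.length_reverse]
      omega
    by_cases hpe : e ∈ p.edges <;> by_cases hqe : e ∈ q.edges
    · -- both contain e
      obtain ⟨w1, w2, hw, p1, p2, hEp, hp1, hp2, hLp, _⟩ := exists_decomp p hp hpe
      obtain ⟨v1, v2, hv, q1, q2, hEq, hq1, hq2, hLq, _⟩ := exists_decomp q hq hqe
      have hndp := hp.isTrail.edges_nodup
      rw [hEp] at hndp
      obtain ⟨hep1, hep2⟩ := hsplit hndp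
      have hndq := hq.isTrail.edges_nodup
      rw [hEq] at hndq
      obtain ⟨heq1, heq2⟩ := hsplit hndq
      have hor : (w1 = v1 ∧ w2 = v2) ∨ (w1 = v2 ∧ w2 = v1) := Sym2.eq_iff.mp (hw.trans hv.symm)
      rcases hor with ⟨rfl, rfl⟩ | ⟨rfl, rfl⟩
      · -- same orientation: contradiction with hpq
        exfalso
        apply hpq
        have h1 := hU x w1 (p1.transfer S (hedgeW p1 hep1)) (q1.transfer S (hedgeW q1 heq1))
          (hp1.transfer _) (hq1.transfer _)
          (by rw [Walk.length_transfer, Walk.length_transfer]; omega)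
        have h2 := hU w2 y (p2.transfer S (hedgeW p2 hep2)) (q2.transfer S (hedgeW q2 heq2))
          (hp2.transfer _) (hq2.transfer _)
          (by rw [Walk.length_transfer, Walk.length_transfer]; omega)
        rw [Walk.edges_transfer, Walk.edges_transfer] at h1 h2
        rw [hEp, hEq, h1, h2]
      · -- opposite orientation
        set r : S'.Walk w1 w2 := p1.reverse.append q1 with hr
        have hre : e ∉ r.edges := by
          rw [hr]
          simp only [Walk.edges_append, Walk.edges_reverse, List.mem_append, List.mem_reverse]
          rintro (h | h)
          exacts [hep1 h, heq1 h]
        have hrS := hedgeW r hre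
        apply finish w1 w2 hw (r.transfer S hrS)
        rw [Walk.length_transfer, hr]
        simp only [Walk.length_append, Walk.length_reverse]
        omega
    · exact aux x y p q hp hq hlen hpe hqe
    · exact aux x y q p hq hp (by omega) hqe hpe
    · -- neither contains e
      have hpS : ∀ f ∈ p.edges, f ∈ S.edgeSet := hedgeW p hpe
      have hqS : ∀ f ∈ q.edges, f ∈ S.edgeSet := hedgeW q hqe
      exfalso
      apply hpq
      have := hU x y (p.transfer S hpS) (q.transfer S hqS) (hp.transfer hpS) (hq.transfer hqS)
        (by rw [Walk.length_transfer, Walk.length_transfer]; exact hlen)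
      rwa [Walk.edges_transfer, Walk.edges_transfer] at this
lemma exists_maximal_usp (k : ℕ) (G : SimpleGraph V) :
    ∃ S : SimpleGraph V, S ≤ G ∧ USP k S ∧
      ∀ S', S' ≤ G → USP k S' → S ≤ S' → S' = S := by
  classical
  set A : Set (SimpleGraph V) := {S | S ≤ G ∧ USP k S} with hA
  have hfin : A.Finite := Set.toFinite A
  have hne : A.Nonempty := ⟨⊥, bot_le, usp_bot k⟩
  obtain ⟨S, hSA, hSmax⟩ := Set.Finite.exists_maximalFor id A hfin hne
  exact ⟨S, hSA.1, hSA.2, fun S' hS'G hS'U hle => le_antisymm (hSmax ⟨hS'G, hS'U⟩ hle) hle⟩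
lemma starW {k : ℕ} {T : SimpleGraph V} (hU : USP k T) (v₀ u : V) {j m : ℕ}
    (hj : T.edist v₀ u = j) (hmk : m + 1 ≤ k) (hmj : m ≤ j) :
    ∀ w1 w2, T.Adj u w1 → T.Adj u w2 → T.edist v₀ w1 ≤ (m : ℕ∞) → T.edist v₀ w2 ≤ (m : ℕ∞) →
      w1 = w2 := by
  classical
  have build : ∀ w, T.Adj u w → T.edist v₀ w ≤ (m : ℕ∞) →
      ∃ (P : T.Walk v₀ u) (l : List (Sym2 V)),
        P.IsPath ∧ P.length ≤ m + 1 ∧ P.edges = l ++ [s(w, u)] := by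
    intro w hadj hle
    have hnetop : T.edist v₀ w ≠ ⊤ := fun h => by simp [h] at hle
    obtain ⟨p0, hp0⟩ := SimpleGraph.exists_walk_of_edist_ne_top hnetop
    have hlen0 : p0.length ≤ m := by
      have : (p0.length : ℕ∞) ≤ (m : ℕ∞) := by rw [hp0]; exact hle
      exact_mod_cast this
    set p := p0.bypass with hpdef
    have hp : p.IsPath := Walk.bypass_isPath p0
    have hplen : p.length ≤ m := le_trans (Walk.length_bypass_le p0) hlen0
    have hu : u ∉ p.support := by
      intro hu
      have h1 : (j : ℕ∞) ≤ ((p.takeUntil u hu).length : ℕ∞) := hj ▸ SimpleGraph.edist_le _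
      have h1' : j ≤ (p.takeUntil u hu).length := by exact_mod_cast h1
      have h2 : (p.takeUntil u hu).length ≤ p.length := Walk.length_takeUntil_le p hu
      have h3 : (p.takeUntil u hu).length + (p.dropUntil u hu).length = p.length := by
        have := congrArg Walk.length (p.take_spec hu)
        rwa [Walk.length_append] at this
      have h4 : (p.dropUntil u hu).length = 0 := by omega
      exact hadj.ne (Walk.eq_of_length_eq_zero h4)
    refine ⟨p.concat hadj.symm, p.edges, ?_, ?_, ?_⟩
    · rw [Walk.isPath_def, Walk.support_concat]
      refine List.nodup_append'.mpr ⟨hp.support_nodup, List.nodup_singleton _, ?_⟩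
      intro a ha hb
      rw [List.mem_singleton] at hb
      subst hb
      exact hu ha
    · rw [Walk.length_concat]; omega
    · rw [Walk.edges_concat, List.concat_eq_append]
  intro w1 w2 h1 h2 hle1 hle2
  obtain ⟨P1, l1, hP1, hL1, hE1⟩ := build w1 h1 hle1
  obtain ⟨P2, l2, hP2, hL2, hE2⟩ := build w2 h2 hle2
  have := hU v₀ u P1 P2 hP1 hP2 (by omega)
  rw [hE1, hE2] at this
  have hsing : [s(w1, u)] = [s(w2, u)] := (List.append_inj' this rfl).2
  have : s(w1, u) = s(w2, u) := by injection hsing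
  exact Sym2.congr_left.mp this
lemma incidence_ncard_eq {S : SimpleGraph V} (v : V) :
    (S.incidenceSet v).ncard = (S.neighborSet v).ncard := by
  have himg : S.incidenceSet v = (fun w => s(v, w)) '' S.neighborSet v := by
    ext e
    constructor
    · rintro ⟨he, hv⟩
      induction e with
      | h a b =>
        rcases Sym2.mem_iff.mp hv with rfl | rfl
        · exact ⟨b, S.mem_edgeSet.mp he, rfl⟩
        · exact ⟨a, (S.mem_edgeSet.mp he).symm, Sym2.eq_swap⟩
    · rintro ⟨w, hw, rfl⟩
      exact ⟨S.mem_edgeSet.mpr hw, Sym2.mem_mk_left v w⟩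
  rw [himg, Set.ncard_image_of_injective _ (fun a b hab => Sym2.congr_right.mp hab)]

lemma adj_of_edges_pos {S : SimpleGraph V} (h : 0 < S.edgeSet.ncard) : ∃ a b, S.Adj a b := by
  obtain ⟨e, he⟩ := (Set.ncard_pos (Set.toFinite _)).mp h
  induction e with
  | h a b => exact ⟨a, b, S.mem_edgeSet.mp he⟩

lemma peel (D : ℕ) : ∀ (m : ℕ) (S : SimpleGraph V), {v | ∃ w, S.Adj v w}.ncard ≤ m →
    D * {v | ∃ w, S.Adj v w}.ncard < S.edgeSet.ncard →
    ∃ T, T ≤ S ∧ (∃ v w, T.Adj v w) ∧ ∀ v, (∃ w, T.Adj v w) → D + 1 ≤ (T.neighborSet v).ncard := by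
  intro m
  induction m with
  | zero =>
    intro S hsupp hlt
    exfalso
    obtain ⟨a, b, hab⟩ := adj_of_edges_pos (lt_of_le_of_lt (Nat.zero_le _) hlt)
    have : 0 < {v | ∃ w, S.Adj v w}.ncard :=
      (Set.ncard_pos (Set.toFinite _)).mpr ⟨a, b, hab⟩
    omega
  | succ m ih =>
    intro S hsupp hlt
    by_cases hall : ∀ v, (∃ w, S.Adj v w) → D + 1 ≤ (S.neighborSet v).ncard
    · obtain ⟨a, b, hab⟩ := adj_of_edges_pos (lt_of_le_of_lt (Nat.zero_le _) hlt)
      exact ⟨S, le_refl S, ⟨a, b, hab⟩, hall⟩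
    · push_neg at hall
      obtain ⟨v, ⟨w, hvw⟩, hsmall⟩ := hall
      have hnb : (S.neighborSet v).ncard ≤ D := by omega
      set S' := S.deleteEdges (S.incidenceSet v) with hS'def
      have hle : S' ≤ S := SimpleGraph.deleteEdges_le _
      have hcardE' : S'.edgeSet.ncard = S.edgeSet.ncard - (S.neighborSet v).ncard := by
        rw [hS'def, SimpleGraph.edgeSet_deleteEdges,
          Set.ncard_diff (S.incidenceSet_subset v) (Set.toFinite _), incidence_ncard_eq]
      have hsupp' : {x | ∃ y, S'.Adj x y} ⊆ {x | ∃ y, S.Adj x y} \ {v} := by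
        rintro x ⟨y, hxy⟩
        rw [hS'def, SimpleGraph.deleteEdges_adj] at hxy
        refine ⟨⟨y, hxy.1⟩, ?_⟩
        rintro rfl
        exact hxy.2 ⟨S.mem_edgeSet.mpr hxy.1, Sym2.mem_mk_left x y⟩
      have hvmem : v ∈ {x | ∃ y, S.Adj x y} := ⟨w, hvw⟩
      have hsc : {x | ∃ y, S'.Adj x y}.ncard ≤ {x | ∃ y, S.Adj x y}.ncard - 1 := by
        calc {x | ∃ y, S'.Adj x y}.ncard
            ≤ ({x | ∃ y, S.Adj x y} \ {v}).ncard := Set.ncard_le_ncard hsupp' (Set.toFinite _)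
          _ = {x | ∃ y, S.Adj x y}.ncard - 1 :=
              Set.ncard_diff_singleton_of_mem hvmem
      have hpos : 1 ≤ {x | ∃ y, S.Adj x y}.ncard :=
        (Set.ncard_pos (Set.toFinite _)).mpr ⟨v, hvmem⟩
      have hmul : D * {x | ∃ y, S'.Adj x y}.ncard + D ≤ D * {x | ∃ y, S.Adj x y}.ncard := by
        have h1 : {x | ∃ y, S'.Adj x y}.ncard + 1 ≤ {x | ∃ y, S.Adj x y}.ncard := by omega
        calc D * {x | ∃ y, S'.Adj x y}.ncard + D
            = D * ({x | ∃ y, S'.Adj x y}.ncard + 1) := by ring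
          _ ≤ D * {x | ∃ y, S.Adj x y}.ncard := Nat.mul_le_mul_left D h1
      obtain ⟨T, hTle, hTne, hTdeg⟩ := ih S' (by omega) (by omega)
      exact ⟨T, hTle.trans hle, hTne, hTdeg⟩
lemma usp_card_bound {k : ℕ} (hk : 1 ≤ k) {S0 : SimpleGraph V} (hU0 : USP k S0)
    (hn : 1 ≤ Fintype.card V) :
    ((S0.edgeSet.ncard : ℝ)) ≤
      (Fintype.card V : ℝ) ^ (1 + 1 / (k : ℝ)) + Fintype.card V := by
  classical
  set n := Fintype.card V with hn_def
  have hnposR : (0 : ℝ) < n := by exact_mod_cast hn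
  set D : ℕ := ⌊(n : ℝ) ^ (1 / (k : ℝ))⌋₊ + 1 with hD_def
  suffices hcard : S0.edgeSet.ncard ≤ D * n by
    have h1 : (D : ℝ) ≤ (n : ℝ) ^ (1 / (k : ℝ)) + 1 := by
      rw [hD_def]
      push_cast
      have := Nat.floor_le (a := (n : ℝ) ^ (1 / (k : ℝ))) (by positivity)
      linarith
    have h2 : ((S0.edgeSet.ncard : ℝ)) ≤ (D : ℝ) * n := by exact_mod_cast hcard
    have h3 : (n : ℝ) ^ (1 / (k : ℝ)) * n = (n : ℝ) ^ (1 + 1 / (k : ℝ)) := by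
      rw [Real.rpow_add hnposR, Real.rpow_one]
      ring
    calc ((S0.edgeSet.ncard : ℝ)) ≤ (D : ℝ) * n := h2
      _ ≤ ((n : ℝ) ^ (1 / (k : ℝ)) + 1) * n :=
          mul_le_mul_of_nonneg_right h1 (le_of_lt hnposR)
      _ = (n : ℝ) ^ (1 + 1 / (k : ℝ)) + n := by rw [add_mul, one_mul, h3]
  by_contra hgt
  push_neg at hgt
  have hsupple : {v | ∃ w, S0.Adj v w}.ncard ≤ n := by
    calc {v | ∃ w, S0.Adj v w}.ncard ≤ (Set.univ : Set V).ncard :=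
          Set.ncard_le_ncard (Set.subset_univ _) (Set.toFinite _)
      _ = n := by rw [Set.ncard_univ, Nat.card_eq_fintype_card]
  obtain ⟨T, hTle, ⟨v₀, w₀, hvw⟩, hdeg⟩ := peel D n S0 hsupple
    (lt_of_le_of_lt (Nat.mul_le_mul_left D hsupple) hgt)
  have hUT : USP k T := usp_mono hTle hU0
  set sph : ℕ → Finset V :=
    fun i => Finset.univ.filter (fun u => T.edist v₀ u = (i : ℕ∞)) with hsph
  have hnbr : ∀ u : V,
      (T.neighborSet u).ncard = (Finset.univ.filter (fun w => T.Adj u w)).card := by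
    intro u
    rw [← Set.ncard_coe_finset]
    congr 1
    ext w
    simp [SimpleGraph.mem_neighborSet]
  have hadj_of : ∀ (u : V) (i : ℕ), 1 ≤ i → T.edist v₀ u = (i : ℕ∞) → ∃ w, T.Adj u w := by
    intro u i hi h
    have hne : T.edist u v₀ ≠ ⊤ := by
      rw [SimpleGraph.edist_comm, h]
      simp
    obtain ⟨p, hp⟩ := SimpleGraph.exists_walk_of_edist_ne_top hne
    cases p with
    | nil =>
      rw [SimpleGraph.edist_self] at h
      have : (i : ℕ∞) = 0 := h.symm
      simp only [Nat.cast_eq_zero] at this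
      omega
    | cons hadj q => exact ⟨_, hadj⟩
  have hstep : ∀ u w : V, T.Adj u w → T.edist v₀ w ≤ T.edist v₀ u + 1 := by
    intro u w h
    calc T.edist v₀ w ≤ T.edist v₀ u + T.edist u w := SimpleGraph.edist_triangle
      _ = T.edist v₀ u + 1 := by rw [SimpleGraph.edist_eq_one_iff_adj.mpr h]
  have grow : ∀ i : ℕ, 1 ≤ i → i + 1 ≤ k → D * (sph i).card ≤ (sph (i + 1)).card := by
    intro i hi1 hik
    have key : ∀ u ∈ sph i, D ≤ ((sph (i + 1)).filter (fun w => T.Adj u w)).card := by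
      intro u hu
      have hju : T.edist v₀ u = (i : ℕ∞) := (Finset.mem_filter.mp hu).2
      set N := Finset.univ.filter (fun w => T.Adj u w) with hN
      have hNdeg : D + 1 ≤ N.card := by
        rw [← hnbr u]
        exact hdeg u (hadj_of u i hi1 hju)
      have hone : (N.filter (fun w => ¬ (T.edist v₀ w = ((i + 1 : ℕ) : ℕ∞)))).card ≤ 1 := by
        apply Finset.card_le_one.mpr
        intro w1 hw1 w2 hw2
        have hle : ∀ w, w ∈ N.filter (fun w => ¬ (T.edist v₀ w = ((i + 1 : ℕ) : ℕ∞))) →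
            T.Adj u w ∧ T.edist v₀ w ≤ (i : ℕ∞) := by
          intro w hw
          obtain ⟨hwN, hwne⟩ := Finset.mem_filter.mp hw
          have hadj : T.Adj u w := (Finset.mem_filter.mp hwN).2
          have hb : T.edist v₀ w ≤ ((i + 1 : ℕ) : ℕ∞) := by
            rw [Nat.cast_add, Nat.cast_one]
            calc T.edist v₀ w ≤ T.edist v₀ u + 1 := hstep u w hadj
              _ = (i : ℕ∞) + 1 := by rw [hju]
          have hnt : T.edist v₀ w ≠ ⊤ := by
            intro hT
            rw [hT] at hb
            have h2 := top_le_iff.mp hb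
            exact ENat.coe_ne_top (i + 1) (by exact_mod_cast h2)
          refine ⟨hadj, ?_⟩
          lift T.edist v₀ w to ℕ using hnt with a ha
          have hb' : a ≤ i + 1 := by exact_mod_cast hb
          have hne' : a ≠ i + 1 := by
            intro hEq
            exact hwne (by exact_mod_cast congrArg (Nat.cast : ℕ → ℕ∞) hEq)
          exact_mod_cast Nat.le_of_lt_succ (by omega)
        obtain ⟨ha1, hb1⟩ := hle w1 hw1
        obtain ⟨ha2, hb2⟩ := hle w2 hw2
        exact starW hUT v₀ u hju hik (le_refl i) w1 w2 ha1 ha2 hb1 hb2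
      have hsplitN := Finset.card_filter_add_card_filter_not
        (s := N) (p := fun w => T.edist v₀ w = ((i + 1 : ℕ) : ℕ∞))
      have hBf : (sph (i + 1)).filter (fun w => T.Adj u w)
          = N.filter (fun w => T.edist v₀ w = ((i + 1 : ℕ) : ℕ∞)) := by
        ext w
        simp only [hsph, hN, Finset.mem_filter, Finset.mem_univ, true_and]
        tauto
      rw [hBf]
      omega
    have key2 : ∀ w ∈ sph (i + 1), ((sph i).filter (fun u => T.Adj u w)).card ≤ 1 := by
      intro w hwB
      have hjw : T.edist v₀ w = ((i + 1 : ℕ) : ℕ∞) := (Finset.mem_filter.mp hwB).2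
      apply Finset.card_le_one.mpr
      intro u1 hu1 u2 hu2
      obtain ⟨hu1A, hu1adj⟩ := Finset.mem_filter.mp hu1
      obtain ⟨hu2A, hu2adj⟩ := Finset.mem_filter.mp hu2
      have he1 : T.edist v₀ u1 = (i : ℕ∞) := (Finset.mem_filter.mp hu1A).2
      have he2 : T.edist v₀ u2 = (i : ℕ∞) := (Finset.mem_filter.mp hu2A).2
      exact starW hUT v₀ w hjw hik (by omega) u1 u2 hu1adj.symm hu2adj.symm
        (le_of_eq he1) (le_of_eq he2)
    calc D * (sph i).card = ∑ _u ∈ sph i, D := by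
          rw [Finset.sum_const, smul_eq_mul, mul_comm]
      _ ≤ ∑ u ∈ sph i, ((sph (i + 1)).filter (fun w => T.Adj u w)).card :=
          Finset.sum_le_sum key
      _ = ∑ u ∈ sph i, ∑ w ∈ sph (i + 1), (if T.Adj u w then 1 else 0) := by
          refine Finset.sum_congr rfl fun u _ => ?_
          rw [Finset.card_filter]
      _ = ∑ w ∈ sph (i + 1), ∑ u ∈ sph i, (if T.Adj u w then 1 else 0) := Finset.sum_comm
      _ = ∑ w ∈ sph (i + 1), ((sph i).filter (fun u => T.Adj u w)).card := by
          refine Finset.sum_congr rfl fun w _ => ?_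
          rw [Finset.card_filter]
      _ ≤ ∑ _w ∈ sph (i + 1), 1 := Finset.sum_le_sum key2
      _ = (sph (i + 1)).card := by rw [Finset.sum_const, smul_eq_mul, mul_one]
  have base : D ≤ (sph 1).card := by
    have hND : D + 1 ≤ (Finset.univ.filter (fun w => T.Adj v₀ w)).card := by
      rw [← hnbr v₀]
      exact hdeg v₀ ⟨w₀, hvw⟩
    have hsub : Finset.univ.filter (fun w => T.Adj v₀ w) ⊆ sph 1 := by
      intro w hw
      have hadj : T.Adj v₀ w := (Finset.mem_filter.mp hw).2
      simp only [hsph, Finset.mem_filter, Finset.mem_univ, true_and]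
      rw [Nat.cast_one]
      exact SimpleGraph.edist_eq_one_iff_adj.mpr hadj
    have := Finset.card_le_card hsub
    omega
  have pow : ∀ i, 1 ≤ i → i ≤ k → D ^ i ≤ (sph i).card := by
    intro i
    induction i with
    | zero => omega
    | succ i ih =>
      intro _ hik
      by_cases hi0 : i = 0
      · subst hi0
        simpa [pow_one] using base
      · have hi1 : 1 ≤ i := by omega
        calc D ^ (i + 1) = D * D ^ i := by ring
          _ ≤ D * (sph i).card := Nat.mul_le_mul_left D (ih hi1 (by omega))
          _ ≤ (sph (i + 1)).card := grow i hi1 hik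
  have hDk : D ^ k ≤ n := by
    calc D ^ k ≤ (sph k).card := pow k hk le_rfl
      _ ≤ Finset.univ.card := Finset.card_filter_le _ _
      _ = n := Finset.card_univ
  have hkne : (k : ℝ) ≠ 0 := Nat.cast_ne_zero.mpr (by omega)
  have hDgt : (n : ℝ) ^ (1 / (k : ℝ)) < D := by
    rw [hD_def]
    push_cast
    exact Nat.lt_floor_add_one _
  have hfinal : (n : ℝ) < (D : ℝ) ^ (k : ℕ) := by
    have h0 : (0 : ℝ) ≤ (n : ℝ) ^ (1 / (k : ℝ)) := by positivity
    have hpow := pow_lt_pow_left₀ hDgt h0 (by omega : k ≠ 0)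
    rwa [← Real.rpow_natCast ((n : ℝ) ^ (1 / (k : ℝ))) k, ← Real.rpow_mul (le_of_lt hnposR),
      one_div_mul_cancel hkne, Real.rpow_one] at hpow
  have : (n : ℝ) < (n : ℝ) := lt_of_lt_of_le hfinal (by exact_mod_cast hDk)
  exact lt_irrefl _ this
lemma static_spanner {k : ℕ} (hk : 1 ≤ k) (hn : 1 ≤ Fintype.card V) (G : SimpleGraph V) :
    ∃ S : SimpleGraph V, S ≤ G ∧
      (∀ u v : V, G.Adj u v → S.edist u v ≤ ((2 * k - 1 : ℕ) : ℕ∞)) ∧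
      ((S.edgeSet.ncard : ℝ) ≤
        (Fintype.card V : ℝ) ^ (1 + 1 / (k : ℝ)) + Fintype.card V) := by
  obtain ⟨S, hle, hU, hmax⟩ := exists_maximal_usp k G
  exact ⟨S, hle, cover_of_maximal hk hle hU hmax, usp_card_bound hk hU hn⟩

/-- There is an absolute constant `C > 0` such that for every `n ≥ 2`, `k ≥ 1`,
and every fully dynamic sequence of graphs on `n` vertices starting from the empty graph,
there is a sequence of maintained `(2k-1)`-spanners of size `O(n^{1+1/k} log n)` with total
recourse `O((U+1) log n)`. -/
theorem dynamic_greedy_spanner :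
    ∃ C : ℝ, 0 < C ∧
      ∀ (n : ℕ), 2 ≤ n → ∀ (k : ℕ), 1 ≤ k →
      ∀ (V : Type) [Fintype V], Fintype.card V = n →
      ∀ (U : ℕ) (G : ℕ → SimpleGraph V),
        G 0 = ⊥ →
        (∀ t, 1 ≤ t → t ≤ U → ∃ e : Sym2 V,
            G t = G (t - 1) ⊔ SimpleGraph.fromEdgeSet {e} ∨
            G t = (G (t - 1)).deleteEdges {e}) →
        ∃ H : ℕ → SimpleGraph V,
          (∀ t ≤ U,
            H t ≤ G t ∧
            (∀ u v : V, (H t).edist u v ≤ ((2 * k - 1 : ℕ) : ℕ∞) * (G t).edist u v) ∧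
            (((H t).edgeSet.ncard : ℝ) ≤ C * (n : ℝ) ^ (1 + 1 / (k : ℝ)) * Real.log n)) ∧
          (∑ t ∈ Finset.Icc 1 U,
              ((symmDiff ((H t).edgeSet) ((H (t - 1)).edgeSet)).ncard : ℝ))
            ≤ C * ((U : ℝ) + 1) * Real.log n := by
  have hlog2 : (0 : ℝ) < Real.log 2 := Real.log_pos (by norm_num)
  refine ⟨9 / Real.log 2, by positivity, ?_⟩
  intro n hn k hk V _ hcard U G hG0 hstep
  classical
  subst hcard
  set n := Fintype.card V with hn_def
  have hn1 : 1 ≤ n := by omega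
  have hnR : (2 : ℝ) ≤ (n : ℝ) := by exact_mod_cast hn
  have hlogn : Real.log 2 ≤ Real.log n := Real.log_le_log (by norm_num) hnR
  have hVne : Nonempty V := Fintype.card_pos_iff.mp (by omega)
  set x : ℝ := (n : ℝ) ^ (1 + 1 / (k : ℝ)) with hx_def
  have hxpos : (0 : ℝ) < x := by
    rw [hx_def]; positivity
  set L : ℕ := ⌈x⌉₊ + n with hL_def
  have hLpos : 0 < L := by omega
  -- chosen update edge per step
  have hstep'' : ∀ s : ℕ, ∃ e : Sym2 V, 1 ≤ s → s ≤ U →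
      ((G s).edgeSet \ (G (s - 1)).edgeSet ⊆ {e}) ∧
      ((G (s - 1)).edgeSet \ (G s).edgeSet ⊆ {e}) := by
    intro s
    by_cases h : 1 ≤ s ∧ s ≤ U
    · obtain ⟨e, he | he⟩ := hstep s h.1 h.2
      · refine ⟨e, fun _ _ => ⟨?_, ?_⟩⟩
        · intro f hf
          rw [he, SimpleGraph.edgeSet_sup] at hf
          rcases hf.1 with h' | h'
          · exact absurd h' hf.2
          · rw [SimpleGraph.edgeSet_fromEdgeSet] at h'
            exact h'.1
        · intro f hf
          rw [he, SimpleGraph.edgeSet_sup] at hf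
          exact absurd (Or.inl hf.1) hf.2
      · refine ⟨e, fun _ _ => ⟨?_, ?_⟩⟩
        · intro f hf
          rw [he, SimpleGraph.edgeSet_deleteEdges] at hf
          exact absurd hf.1.1 hf.2
        · intro f hf
          rw [he, SimpleGraph.edgeSet_deleteEdges] at hf
          by_contra hne
          exact hf.2 ⟨hf.1, hne⟩
    · exact ⟨s(Classical.arbitrary V, Classical.arbitrary V),
        fun h1 h2 => absurd ⟨h1, h2⟩ h⟩
  choose ee hee using hstep''
  set Xq : ℕ → Set (Sym2 V) :=
    fun q => ee '' ↑(Finset.Ioo (q * L) (q * L + L)) with hXq_def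
  set Yq : ℕ → SimpleGraph V :=
    fun q => SimpleGraph.fromEdgeSet ((G (q * L)).edgeSet \ Xq q) with hYq_def
  have hSp := fun q : ℕ => static_spanner (V := V) hk hn1 (Yq q)
  choose Sp hSple hSpcov hSpcard using hSp
  set M : ℕ → Set (Sym2 V) :=
    fun q => ((Sp q).edgeSet ∪ Xq q) ∪ ((G (q * L)).edgeSet)ᶜ with hM_def
  set H : ℕ → SimpleGraph V :=
    fun t => SimpleGraph.fromEdgeSet ((G t).edgeSet ∩ M (t / L)) with hH_def
  have hHedge : ∀ t, (H t).edgeSet = (G t).edgeSet ∩ M (t / L) :=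
    fun t => edgeSet_fromEdgeSet_of_subset Set.inter_subset_left
  have hHle : ∀ t, H t ≤ G t := fun t => fromEdgeSet_le' Set.inter_subset_left
  -- size of the pieces
  have hSpL : ∀ q, (Sp q).edgeSet.ncard ≤ L := by
    intro q
    have h1 : ((Sp q).edgeSet.ncard : ℝ) ≤ x + n := hSpcard q
    have h2 : x ≤ (⌈x⌉₊ : ℝ) := Nat.le_ceil x
    have h3 : ((Sp q).edgeSet.ncard : ℝ) ≤ (L : ℝ) := by
      rw [hL_def]; push_cast; linarith
    exact_mod_cast h3
  have hXL : ∀ q, (Xq q).ncard ≤ L := by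
    intro q
    calc (Xq q).ncard ≤ (↑(Finset.Ioo (q * L) (q * L + L)) : Set ℕ).ncard :=
          Set.ncard_image_le (Set.toFinite _)
      _ = (Finset.Ioo (q * L) (q * L + L)).card := Set.ncard_coe_finset _
      _ ≤ L := by rw [Nat.card_Ioo]; omega
  -- stability of the epoch-start edges
  have hstab : ∀ t, t ≤ U → ∀ s, (t / L) * L ≤ s → s ≤ t →
      (G ((t / L) * L)).edgeSet \ Xq (t / L) ⊆ (G s).edgeSet := by
    intro t htU s hs1 hs2
    induction s with
    | zero =>
      intro f hf
      have h0 : (t / L) * L = 0 := by omega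
      rw [h0] at hf
      exact hf.1
    | succ s ih =>
      rcases Nat.lt_or_ge ((t / L) * L) (s + 1) with hlt | hge
      · intro f hf
        have hfs : f ∈ (G s).edgeSet := ih (by omega) (by omega) hf
        by_contra hnot
        have hdel : f ∈ (G ((s + 1) - 1)).edgeSet \ (G (s + 1)).edgeSet := by
          refine ⟨?_, hnot⟩
          simpa using hfs
        have hfe : f ∈ ({ee (s + 1)} : Set (Sym2 V)) :=
          (hee (s + 1) (by omega) (by omega)).2 hdel
        apply hf.2
        rw [hXq_def]
        refine ⟨s + 1, ?_, hfe.symm⟩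
        have htlt : t < t / L * L + L := Nat.lt_div_mul_add hLpos
        simp only [Finset.coe_Ioo, Set.mem_Ioo]
        omega
      · intro f hf
        have h0 : (t / L) * L = s + 1 := by omega
        rw [h0] at hf
        exact hf.1
  -- cover property
  have hcov : ∀ t, t ≤ U → ∀ u v : V, (G t).Adj u v →
      (H t).edist u v ≤ ((2 * k - 1 : ℕ) : ℕ∞) := by
    intro t htU u v huv
    have he : s(u, v) ∈ (G t).edgeSet := huv
    by_cases hM1 : s(u, v) ∈ M (t / L)
    · have hadj : (H t).Adj u v := by
        rw [← SimpleGraph.mem_edgeSet, hHedge t]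
        exact ⟨he, hM1⟩
      calc (H t).edist u v = 1 := SimpleGraph.edist_eq_one_iff_adj.mpr hadj
        _ ≤ ((2 * k - 1 : ℕ) : ℕ∞) := by exact_mod_cast (by omega : 1 ≤ 2 * k - 1)
    · rw [hM_def] at hM1
      simp only [Set.mem_union, Set.mem_compl_iff, not_or, not_not] at hM1
      obtain ⟨⟨hne1, hne2⟩, hmem⟩ := hM1
      have hYadj : (Yq (t / L)).Adj u v := by
        rw [hYq_def, SimpleGraph.fromEdgeSet_adj]
        exact ⟨⟨hmem, hne2⟩, huv.ne⟩
      have hcov' := hSpcov (t / L) u v hYadj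
      have hSpH : Sp (t / L) ≤ H t := by
        rw [← SimpleGraph.edgeSet_subset_edgeSet, hHedge t]
        intro f hf
        have hfY : f ∈ (Yq (t / L)).edgeSet :=
          SimpleGraph.edgeSet_subset_edgeSet.mpr (hSple (t / L)) hf
        have hfY' : f ∈ (G ((t / L) * L)).edgeSet \ Xq (t / L) := by
          rw [hYq_def, SimpleGraph.edgeSet_fromEdgeSet] at hfY
          exact hfY.1
        exact ⟨hstab t htU t (Nat.div_mul_le_self t L) le_rfl hfY',
          Or.inl (Or.inl hf)⟩
      exact le_trans (SimpleGraph.edist_anti hSpH) hcov'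
  -- newly inserted edges in the current epoch
  have hnewaux : ∀ t, t ≤ U → ∀ s, (t / L) * L ≤ s → s ≤ t →
      ((G s).edgeSet \ (G ((t / L) * L)).edgeSet).ncard ≤ s - (t / L) * L := by
    intro t htU s hs1 hs2
    induction s with
    | zero =>
      have h0 : (t / L) * L = 0 := by omega
      rw [h0]
      simp
    | succ s ih =>
      rcases Nat.lt_or_ge ((t / L) * L) (s + 1) with hlt | hge
      · have hih := ih (by omega) (by omega)
        have hsub : (G (s + 1)).edgeSet \ (G ((t / L) * L)).edgeSet ⊆
            ((G s).edgeSet \ (G ((t / L) * L)).edgeSet) ∪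
            ((G (s + 1)).edgeSet \ (G s).edgeSet) := by
          intro f hf
          by_cases hfs : f ∈ (G s).edgeSet
          · exact Or.inl ⟨hfs, hf.2⟩
          · exact Or.inr ⟨hf.1, hfs⟩
        have hins : ((G (s + 1)).edgeSet \ (G s).edgeSet).ncard ≤ 1 := by
          have h1 := (hee (s + 1) (by omega) (by omega)).1
          have h1' : (G (s + 1)).edgeSet \ (G s).edgeSet ⊆ {ee (s + 1)} := by
            simpa using h1
          calc ((G (s + 1)).edgeSet \ (G s).edgeSet).ncard
              ≤ ({ee (s + 1)} : Set (Sym2 V)).ncard :=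
                Set.ncard_le_ncard h1' (Set.toFinite _)
            _ = 1 := Set.ncard_singleton _
        calc ((G (s + 1)).edgeSet \ (G ((t / L) * L)).edgeSet).ncard
            ≤ (((G s).edgeSet \ (G ((t / L) * L)).edgeSet) ∪
              ((G (s + 1)).edgeSet \ (G s).edgeSet)).ncard :=
              Set.ncard_le_ncard hsub (Set.toFinite _)
          _ ≤ ((G s).edgeSet \ (G ((t / L) * L)).edgeSet).ncard +
              ((G (s + 1)).edgeSet \ (G s).edgeSet).ncard := Set.ncard_union_le _ _
          _ ≤ (s - (t / L) * L) + 1 := by omega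
          _ ≤ (s + 1) - (t / L) * L := by omega
      · have h0 : (t / L) * L = s + 1 := by omega
        rw [h0]
        simp
  -- size bound (nat)
  have hsize : ∀ t, t ≤ U → (H t).edgeSet.ncard ≤ 3 * L := by
    intro t htU
    have hsub : (H t).edgeSet ⊆
        ((Sp (t / L)).edgeSet ∪ Xq (t / L)) ∪
        ((G t).edgeSet \ (G ((t / L) * L)).edgeSet) := by
      rw [hHedge t]
      rintro f ⟨hfG, hfM⟩
      rw [hM_def] at hfM
      rcases hfM with (h | h) | h
      · exact Or.inl (Or.inl h)
      · exact Or.inl (Or.inr h)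
      · exact Or.inr ⟨hfG, h⟩
    have hnew : ((G t).edgeSet \ (G ((t / L) * L)).edgeSet).ncard ≤ L := by
      have h1 := hnewaux t htU t (Nat.div_mul_le_self t L) le_rfl
      have htlt : t < t / L * L + L := Nat.lt_div_mul_add hLpos
      omega
    calc (H t).edgeSet.ncard
        ≤ (((Sp (t / L)).edgeSet ∪ Xq (t / L)) ∪
          ((G t).edgeSet \ (G ((t / L) * L)).edgeSet)).ncard :=
          Set.ncard_le_ncard hsub (Set.toFinite _)
      _ ≤ ((Sp (t / L)).edgeSet ∪ Xq (t / L)).ncard +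
          ((G t).edgeSet \ (G ((t / L) * L)).edgeSet).ncard := Set.ncard_union_le _ _
      _ ≤ ((Sp (t / L)).edgeSet.ncard + (Xq (t / L)).ncard) +
          ((G t).edgeSet \ (G ((t / L) * L)).edgeSet).ncard := by
          have := Set.ncard_union_le ((Sp (t / L)).edgeSet) (Xq (t / L))
          omega
      _ ≤ 3 * L := by
          have := hSpL (t / L)
          have := hXL (t / L)
          omega
  -- L is at most 3x in the reals
  have hxn : (n : ℝ) ≤ x := by
    rw [hx_def]
    conv_lhs => rw [← Real.rpow_one (n : ℝ)]
    apply Real.rpow_le_rpow_of_exponent_le (by linarith)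
    have : (0 : ℝ) ≤ 1 / (k : ℝ) := by positivity
    linarith
  have hx1 : (1 : ℝ) ≤ x := by linarith
  have hLR : (L : ℝ) ≤ 3 * x := by
    rw [hL_def]
    push_cast
    have := Nat.ceil_lt_add_one (le_of_lt hxpos)
    linarith
  refine ⟨H, ?_, ?_⟩
  · intro t htU
    refine ⟨hHle t, ?_, ?_⟩
    · exact spanner_of_cover (by omega) (hcov t htU)
    · have h3L : ((H t).edgeSet.ncard : ℝ) ≤ 3 * (L : ℝ) := by
        exact_mod_cast hsize t htU
      have h9 : ((H t).edgeSet.ncard : ℝ) ≤ 9 * x := by linarith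
      calc ((H t).edgeSet.ncard : ℝ) ≤ 9 * x := h9
        _ = (9 / Real.log 2) * x * Real.log 2 := by field_simp
        _ ≤ (9 / Real.log 2) * x * Real.log n := by
            apply mul_le_mul_of_nonneg_left hlogn
            positivity
  · -- recourse bound
    have hrec_in : ∀ t, 1 ≤ t → t ≤ U → ¬ (L ∣ t) →
        (symmDiff (H t).edgeSet (H (t - 1)).edgeSet).ncard ≤ 1 := by
      intro t h1 h2 hndvd
      have hq : (t - 1) / L = t / L := by
        have hmod := Nat.div_add_mod t L
        have hmodlt : t % L < L := Nat.mod_lt t hLpos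
        have hmne : t % L ≠ 0 := fun h => hndvd (Nat.dvd_of_mod_eq_zero h)
        have ht1 : t - 1 = (t % L - 1) + L * (t / L) := by omega
        rw [ht1, Nat.add_mul_div_left _ _ hLpos, Nat.div_eq_of_lt (by omega)]
        omega
      have hsd : symmDiff (H t).edgeSet (H (t - 1)).edgeSet =
          (symmDiff (G t).edgeSet (G (t - 1)).edgeSet) ∩ M (t / L) := by
        rw [hHedge t, hHedge (t - 1), hq]
        ext f
        simp only [Set.mem_symmDiff, Set.mem_inter_iff]
        tauto
      have hsub2 : symmDiff (G t).edgeSet (G (t - 1)).edgeSet ⊆ {ee t} := by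
        intro f hf
        rcases Set.mem_symmDiff.mp hf with ⟨h3, h4⟩ | ⟨h3, h4⟩
        · exact (hee t h1 h2).1 ⟨h3, h4⟩
        · exact (hee t h1 h2).2 ⟨h3, h4⟩
      calc (symmDiff (H t).edgeSet (H (t - 1)).edgeSet).ncard
          ≤ ({ee t} : Set (Sym2 V)).ncard := by
            apply Set.ncard_le_ncard _ (Set.toFinite _)
            rw [hsd]
            exact fun f hf => hsub2 hf.1
        _ = 1 := Set.ncard_singleton _
    have hrec_bd : ∀ t, 1 ≤ t → t ≤ U →
        (symmDiff (H t).edgeSet (H (t - 1)).edgeSet).ncard ≤ 6 * L := by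
      intro t h1 h2
      have hsub : symmDiff (H t).edgeSet (H (t - 1)).edgeSet ⊆
          (H t).edgeSet ∪ (H (t - 1)).edgeSet := by
        intro f hf
        rcases Set.mem_symmDiff.mp hf with ⟨h3, _⟩ | ⟨h3, _⟩
        · exact Or.inl h3
        · exact Or.inr h3
      calc (symmDiff (H t).edgeSet (H (t - 1)).edgeSet).ncard
          ≤ ((H t).edgeSet ∪ (H (t - 1)).edgeSet).ncard :=
            Set.ncard_le_ncard hsub (Set.toFinite _)
        _ ≤ (H t).edgeSet.ncard + (H (t - 1)).edgeSet.ncard := Set.ncard_union_le _ _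
        _ ≤ 6 * L := by
            have := hsize t h2
            have := hsize (t - 1) (by omega)
            omega
    have htot : (∑ t ∈ Finset.Icc 1 U,
        (symmDiff (H t).edgeSet (H (t - 1)).edgeSet).ncard) ≤ 7 * U := by
      rw [← Finset.sum_filter_add_sum_filter_not (Finset.Icc 1 U) (fun t => L ∣ t)]
      have hcount : ((Finset.Icc 1 U).filter (fun t => L ∣ t)).card = U / L := by
        rw [show Finset.Icc 1 U = Finset.Ioc 0 U from (by rw [← Finset.Icc_add_one_left_eq_Ioc]; rfl)]
        exact Nat.Ioc_filter_dvd_card_eq_div U L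
      have h1 : ∑ t ∈ (Finset.Icc 1 U).filter (fun t => L ∣ t),
          (symmDiff (H t).edgeSet (H (t - 1)).edgeSet).ncard ≤ (U / L) * (6 * L) := by
        rw [← hcount]
        apply Finset.sum_le_card_nsmul
        intro t ht
        obtain ⟨htI, _⟩ := Finset.mem_filter.mp ht
        obtain ⟨ha, hb⟩ := Finset.mem_Icc.mp htI
        exact hrec_bd t ha hb
      have h2 : ∑ t ∈ (Finset.Icc 1 U).filter (fun t => ¬ (L ∣ t)),
          (symmDiff (H t).edgeSet (H (t - 1)).edgeSet).ncard ≤ U := by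
        calc _ ≤ ((Finset.Icc 1 U).filter (fun t => ¬ (L ∣ t))).card * 1 := by
              apply Finset.sum_le_card_nsmul
              intro t ht
              obtain ⟨htI, hnd⟩ := Finset.mem_filter.mp ht
              obtain ⟨ha, hb⟩ := Finset.mem_Icc.mp htI
              exact hrec_in t ha hb hnd
          _ ≤ U := by
              rw [mul_one]
              calc _ ≤ (Finset.Icc 1 U).card := Finset.card_filter_le _ _
                _ = U := by rw [Nat.card_Icc]; omega
      have h3 : (U / L) * (6 * L) ≤ 6 * U := by
        have := Nat.div_mul_le_self U L
        calc (U / L) * (6 * L) = 6 * ((U / L) * L) := by ring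
          _ ≤ 6 * U := Nat.mul_le_mul_left 6 this
      omega
    have htotR : (∑ t ∈ Finset.Icc 1 U,
        ((symmDiff (H t).edgeSet (H (t - 1)).edgeSet).ncard : ℝ)) ≤ 7 * (U : ℝ) := by
      have := htot
      push_cast [← Nat.cast_sum]
      exact_mod_cast this
    calc (∑ t ∈ Finset.Icc 1 U,
        ((symmDiff (H t).edgeSet (H (t - 1)).edgeSet).ncard : ℝ)) ≤ 7 * (U : ℝ) := htotR
      _ ≤ 9 * ((U : ℝ) + 1) := by linarith [Nat.cast_nonneg (α := ℝ) U]
      _ = (9 / Real.log 2) * ((U : ℝ) + 1) * Real.log 2 := by field_simp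
      _ ≤ (9 / Real.log 2) * ((U : ℝ) + 1) * Real.log n := by
          apply mul_le_mul_of_nonneg_left hlogn
          positivity
end

section
/- Let k ≥ 1 be a natural number, let L be a list of unordered pairs of vertices of a finite vertex type V, and let H = greedy(k, L). Then for every pair {u,v} occurring as an entry of L, the extended distance between u and v in H satisfies edist_H(u,v) ≤ 2k − 1. -/
/-- The greedy spanner construction: process the entries of `L` in order, starting from the
empty graph, adding an entry `{u,v}` as an edge iff the extended distance between `u` and `v`
in the graph built so far is at least `2k`. -/
noncomputable def greedy {V : Type*} (k : ℕ) (L : List (Sym2 V)) : SimpleGraph V :=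
  L.foldl (fun H e =>
    if (2 * k : ℕ∞) ≤ Sym2.lift ⟨H.edist, fun _ _ => H.edist_comm⟩ e
    then H ⊔ SimpleGraph.fromEdgeSet {e} else H) ⊥

/-- every entry `{u,v}` of `L` has extended distance at most `2k - 1` in the
greedy graph `greedy k L`. -/
theorem greedy_edist_of_mem {V : Type*} (k : ℕ) (hk : 1 ≤ k) (L : List (Sym2 V))
    (u v : V) (huv : s(u, v) ∈ L) :
    (greedy k L).edist u v ≤ ((2 * k - 1 : ℕ) : ℕ∞) := by
  classical
  set step : SimpleGraph V → Sym2 V → SimpleGraph V := fun H e =>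
    if (2 * k : ℕ∞) ≤ Sym2.lift ⟨H.edist, fun _ _ => H.edist_comm⟩ e
    then H ⊔ SimpleGraph.fromEdgeSet {e} else H with hstep
  have hmono : ∀ (H : SimpleGraph V) (e : Sym2 V), H ≤ step H e := by
    intro H e
    rw [hstep]
    dsimp only
    split <;> simp
  have hfold : ∀ (L : List (Sym2 V)) (H : SimpleGraph V), H ≤ L.foldl step H := by
    intro L
    induction L with
    | nil => intro H; simp
    | cons e L ih => intro H; exact (hmono H e).trans (ih (step H e))
  -- main induction
  suffices h : ∀ (L : List (Sym2 V)) (H : SimpleGraph V), s(u, v) ∈ L →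
      (L.foldl step H).edist u v ≤ ((2 * k - 1 : ℕ) : ℕ∞) by
    exact h L ⊥ huv
  clear huv
  intro L
  induction L with
  | nil => intro H h; simp at h
  | cons e L ih =>
    intro H h
    rcases List.mem_cons.mp h with h | h
    · -- e = s(u,v)
      subst h
      have key : (step H s(u, v)).edist u v ≤ ((2 * k - 1 : ℕ) : ℕ∞) := by
        rw [hstep]
        dsimp only
        split
        · -- edge added
          rcases eq_or_ne u v with rfl | hne
          · simp [SimpleGraph.edist_self]
          · have hadj : (H ⊔ SimpleGraph.fromEdgeSet {s(u, v)}).Adj u v := by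
              right
              exact ⟨rfl, hne⟩
            have h1 : (H ⊔ SimpleGraph.fromEdgeSet {s(u, v)}).edist u v = 1 :=
              SimpleGraph.edist_eq_one_iff_adj.mpr hadj
            rw [h1]
            exact_mod_cast (by omega : (1:ℕ) ≤ 2*k-1)
        · rename_i hlt
          push_neg at hlt
          simp only [Sym2.lift_mk] at hlt
          have hne_top : H.edist u v ≠ ⊤ := (hlt.trans_le le_top).ne
          lift H.edist u v to ℕ using hne_top with m hm
          have : m < 2 * k := by exact_mod_cast hlt
          exact_mod_cast Nat.le_sub_one_of_lt this
      calc (L.foldl step (step H s(u, v))).edist u v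
          ≤ (step H s(u, v)).edist u v :=
            SimpleGraph.edist_anti (hfold L (step H s(u, v)))
        _ ≤ _ := key
    · exact ih (step H e) h
end

section
/- Let k ≥ 1 be a natural number and let L be a list of unordered pairs of vertices of a finite vertex type V. Then the graph H = greedy(k, L) contains no cycle of length at most 2k; equivalently, the girth of H is at least 2k + 1. -/
open SimpleGraph Walk in
/-- If a walk ending at `z`, with no repeated vertices, contains the edge `s(z,v)`,
then that edge is its last edge. -/
lemma greedy_aux_last_edge {V : Type*} {G : SimpleGraph V} {v : V} :
    ∀ {x z : V} (q : G.Walk x z), z ≠ v → q.support.Nodup → s(z, v) ∈ q.edges →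
      ∃ r : G.Walk x v, r.length + 1 = q.length ∧ q.edges = r.edges ++ [s(v, z)] := by
  intro x z q
  induction q with
  | nil => simp
  | @cons x y z h' q' ih =>
    intro hzv hnd he
    rw [Walk.support_cons, List.nodup_cons] at hnd
    obtain ⟨hx, hnd'⟩ := hnd
    rw [Walk.edges_cons, List.mem_cons] at he
    have hzx : z ≠ x := by
      rintro rfl; exact hx q'.end_mem_support
    rcases he with he | he
    · have : z = x ∧ v = y ∨ z = y ∧ v = x := Sym2.eq_iff.mp he
      rcases this with ⟨rfl, rfl⟩ | ⟨rfl, rfl⟩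
      · exact absurd rfl hzx
      · -- q' : G.Walk z z with nodup support, so q' = nil
        cases q' with
        | nil =>
          refine ⟨Walk.nil, by simp, ?_⟩
          simp [Sym2.eq_swap]
        | cons h'' q'' =>
          exfalso
          rw [Walk.support_cons, List.nodup_cons] at hnd'
          exact hnd'.1 q''.end_mem_support
    · obtain ⟨r', hlen, hedges⟩ := ih hzv hnd' he
      exact ⟨Walk.cons h' r', by simp [hlen], by simp [hedges]⟩

open SimpleGraph Walk in
/-- Removing the edge `s(u,v)` from a cycle through `u` gives a walk from `v` to `u`
one shorter which avoids the edge. -/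
lemma greedy_cycle_remove {V : Type*} {G : SimpleGraph V} {u v : V}
    (c : G.Walk u u) (hc : c.IsCycle) (he : s(u, v) ∈ c.edges) :
    ∃ q : G.Walk v u, q.length + 1 = c.length ∧ s(u, v) ∉ q.edges := by
  have huv : u ≠ v := (c.adj_of_mem_edges he).ne
  cases c with
  | nil => simp at he
  | @cons _ x _ h q =>
    obtain ⟨hq, hfe⟩ := (Walk.cons_isCycle_iff q h).mp hc
    rw [Walk.edges_cons, List.mem_cons] at he
    rcases he with he | he
    · -- first edge: v = x
      have : u = u ∧ v = x ∨ u = x ∧ v = u := Sym2.eq_iff.mp he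
      rcases this with ⟨-, rfl⟩ | ⟨rfl, -⟩
      · exact ⟨q, by simp, hfe⟩
      · exact absurd rfl h.ne
    · obtain ⟨r, hlen, hedges⟩ := greedy_aux_last_edge q huv hq.support_nodup he
      refine ⟨(Walk.cons h r).reverse, by simp [hlen], ?_⟩
      rw [Walk.edges_reverse, List.mem_reverse, Walk.edges_cons, List.mem_cons]
      rintro (h1 | h2)
      · rw [← h1] at hfe
        exact hfe he
      · have hnd : q.edges.Nodup := hq.isTrail.edges_nodup
        rw [hedges, List.nodup_append] at hnd
        exact hnd.2.2 _ h2 _ (List.mem_singleton_self _) Sym2.eq_swap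

/-- the greedy graph `greedy k L` has no cycle of length at most `2k`;
equivalently, its girth is at least `2k + 1`. -/
theorem greedy_girth {V : Type*} (k : ℕ) (hk : 1 ≤ k) (L : List (Sym2 V)) :
    ∀ (v : V) (c : (greedy k L).Walk v v), c.IsCycle → 2 * k + 1 ≤ c.length := by
  classical
  suffices h : ∀ (M : SimpleGraph V),
      (∀ v (c : M.Walk v v), c.IsCycle → 2 * k + 1 ≤ c.length) →
      ∀ v (c : ((L.foldl (fun H e =>
        if (2 * k : ℕ∞) ≤ Sym2.lift ⟨H.edist, fun _ _ => H.edist_comm⟩ e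
        then H ⊔ SimpleGraph.fromEdgeSet {e} else H) M)).Walk v v),
        c.IsCycle → 2 * k + 1 ≤ c.length by
    refine h ⊥ ?_
    intro v c hc
    exfalso
    cases c with
    | nil => exact hc.ne_nil rfl
    | cons h q => exact h
  induction L with
  | nil => intro M hM; simpa using hM
  | cons e L ih =>
    intro M hM
    rw [List.foldl_cons]
    apply ih
    induction e using Sym2.ind with
    | _ a b =>
    by_cases hcond : (2 * k : ℕ∞) ≤ M.edist a b
    · -- the edge s(a,b) was added; edist in M between a and b is ≥ 2k
      rw [if_pos (by rwa [Sym2.lift_mk])]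
      intro v c hc
      have hedge : ∀ f ∈ (M ⊔ SimpleGraph.fromEdgeSet {s(a, b)}).edgeSet,
          f ≠ s(a, b) → f ∈ M.edgeSet := by
        intro f hf hne
        rw [SimpleGraph.edgeSet_sup, SimpleGraph.edgeSet_fromEdgeSet] at hf
        rcases hf with h1 | h2
        · exact h1
        · exact absurd h2.1 hne
      by_cases hmem : s(a, b) ∈ c.edges
      · -- the cycle uses the new edge
        have ha : a ∈ c.support := c.fst_mem_support_of_mem_edges hmem
        have hc' := hc.rotate ha
        have hmem' : s(a, b) ∈ (c.rotate a ha).edges :=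
          (c.rotate_edges a ha).mem_iff.mpr hmem
        obtain ⟨q, hlen, hne⟩ := greedy_cycle_remove (c.rotate a ha) hc' hmem'
        have hlenrot : (c.rotate a ha).length = c.length := by
          rw [← SimpleGraph.Walk.length_edges, ← SimpleGraph.Walk.length_edges]
          exact (c.rotate_edges a ha).perm.length_eq
        have hqsub : ∀ f ∈ q.edges, f ∈ M.edgeSet := by
          intro f hf
          refine hedge f (q.edges_subset_edgeSet hf) ?_
          rintro rfl; exact hne hf
        have hdist : M.edist b a ≤ q.length := by
          have := (q.transfer M hqsub).edist_le
          rwa [SimpleGraph.Walk.length_transfer] at this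
        have h2k : 2 * k ≤ q.length := by
          have : (2 * k : ℕ∞) ≤ q.length := hcond.trans (SimpleGraph.edist_comm.le.trans hdist)
          exact_mod_cast this
        omega
      · -- the cycle avoids the new edge; transfer it to M
        have hsub : ∀ f ∈ c.edges, f ∈ M.edgeSet := fun f hf =>
          hedge f (c.edges_subset_edgeSet hf) (by rintro rfl; exact hmem hf)
        have := hM v (c.transfer M hsub) (hc.transfer hsub)
        rwa [SimpleGraph.Walk.length_transfer] at this
    · rw [if_neg (by rwa [Sym2.lift_mk])]
      exact hM
end

section
/- Let k ≥ 1 be a natural number and let H be a simple graph on a finite vertex type with n vertices in which every cycle has length at least 2k + 1 (i.e., the girth of H exceeds 2k). Then the number of edges of H is at most n^{1+1/k} + n (as a real-number inequality). -/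
open Finset SimpleGraph

namespace MooreAux

variable {V : Type*} [DecidableEq V]

/-- In a path ending at `w`, there is at most one edge of the form `s(·, w)`. -/
lemma unique_edge_at_end {H : SimpleGraph V} {v w : V} (p : H.Walk v w) (hp : p.IsPath) :
    ∀ {x y : V}, s(x, w) ∈ p.edges → s(y, w) ∈ p.edges → x = y := by
  induction p with
  | nil => simp
  | @cons a b c h q ih =>
    intro x y hx hy
    rw [SimpleGraph.Walk.edges_cons, List.mem_cons] at hx hy
    rw [SimpleGraph.Walk.cons_isPath_iff] at hp
    have hac : a ≠ c := fun hac => hp.2 (hac ▸ q.end_mem_support)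
    have key : ∀ z : V, s(z, c) = s(a, b) → z = a ∧ b = c := by
      intro z hz
      rw [Sym2.eq_iff] at hz
      rcases hz with ⟨rfl, rfl⟩ | ⟨rfl, rfl⟩
      · exact ⟨rfl, rfl⟩
      · exact absurd rfl hac
    rcases hx with hx | hx
    · obtain ⟨rfl, rfl⟩ := key x hx
      have hq1 := hp.1
      have hqe : q.edges = [] := by
        cases q with
        | nil => rfl
        | cons h' q' =>
          rw [SimpleGraph.Walk.cons_isPath_iff] at hq1
          exact absurd q'.end_mem_support hq1.2
      rcases hy with hy | hy
      · exact ((key y hy).1).symm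
      · rw [hqe] at hy
        simp at hy
    · rcases hy with hy | hy
      · obtain ⟨rfl, rfl⟩ := key y hy
        have hq1 := hp.1
        have hqe : q.edges = [] := by
          cases q with
          | nil => rfl
          | cons h' q' =>
            rw [SimpleGraph.Walk.cons_isPath_iff] at hq1
            exact absurd q'.end_mem_support hq1.2
        rw [hqe] at hx
        simp at hx
      · exact ih hp.1 hx hy

/-- Uniqueness of short paths in a graph of girth `> 2k`. -/
lemma path_eq_of_short {H : SimpleGraph V} {k : ℕ}
    (hg : ∀ (v : V) (c : H.Walk v v), c.IsCycle → 2 * k + 1 ≤ c.length)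
    {v w : V} {p q : H.Walk v w} (hp : p.IsPath) (hq : q.IsPath)
    (hpl : p.length ≤ k) (hql : q.length ≤ k) : p = q := by
  classical
  by_contra hne
  set s : Set (Sym2 V) := {e | e ∈ p.edges ∨ e ∈ q.edges} with hs
  have hmemp : ∀ e ∈ p.edges, e ∈ (SimpleGraph.fromEdgeSet s).edgeSet := by
    intro e he
    rw [SimpleGraph.edgeSet_fromEdgeSet]
    exact ⟨Or.inl he, H.not_isDiag_of_mem_edgeSet (p.edges_subset_edgeSet he)⟩
  have hmemq : ∀ e ∈ q.edges, e ∈ (SimpleGraph.fromEdgeSet s).edgeSet := by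
    intro e he
    rw [SimpleGraph.edgeSet_fromEdgeSet]
    exact ⟨Or.inr he, H.not_isDiag_of_mem_edgeSet (q.edges_subset_edgeSet he)⟩
  have hsub : (SimpleGraph.fromEdgeSet s).edgeSet ⊆ H.edgeSet := by
    intro e he
    rw [SimpleGraph.edgeSet_fromEdgeSet] at he
    rcases he.1 with h | h
    · exact p.edges_subset_edgeSet h
    · exact q.edges_subset_edgeSet h
  have back : ∀ (r : H.Walk v w) (hr : ∀ e ∈ r.edges, e ∈ (SimpleGraph.fromEdgeSet s).edgeSet),
      (r.transfer (SimpleGraph.fromEdgeSet s) hr).transfer H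
        (fun e he => hsub ((r.transfer (SimpleGraph.fromEdgeSet s) hr).edges_subset_edgeSet he))
        = r := by
    intro r hr
    rw [SimpleGraph.Walk.transfer_transfer]
    exact r.transfer_self
  have hp' : (p.transfer (SimpleGraph.fromEdgeSet s) hmemp).IsPath := hp.transfer _
  have hq' : (q.transfer (SimpleGraph.fromEdgeSet s) hmemq).IsPath := hq.transfer _
  have hnac : ¬ (SimpleGraph.fromEdgeSet s).IsAcyclic := by
    intro hac
    apply hne
    have hpq : p.transfer (SimpleGraph.fromEdgeSet s) hmemp
        = q.transfer (SimpleGraph.fromEdgeSet s) hmemq := by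
      have := hac.path_unique ⟨_, hp'⟩ ⟨_, hq'⟩
      exact congrArg Subtype.val this
    have := congrArg (fun r : (SimpleGraph.fromEdgeSet s).Walk v w =>
      r.transfer H (fun e he => hsub (r.edges_subset_edgeSet he))) hpq
    rw [back p hmemp, back q hmemq] at this
    exact this
  rw [SimpleGraph.IsAcyclic] at hnac
  push_neg at hnac
  obtain ⟨x, c, hc⟩ := hnac
  have hce : ∀ e ∈ c.edges, e ∈ H.edgeSet := fun e he => hsub (c.edges_subset_edgeSet he)
  have hlong : 2 * k + 1 ≤ c.length := by
    have := hg x (c.transfer H hce) (hc.transfer hce)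
    rwa [SimpleGraph.Walk.length_transfer] at this
  have hshort : c.length ≤ 2 * k := by
    have hnodup : c.edges.Nodup := hc.edges_nodup
    have hsub2 : c.edges ⊆ p.edges ++ q.edges := by
      intro e he
      have := c.edges_subset_edgeSet he
      rw [SimpleGraph.edgeSet_fromEdgeSet] at this
      rcases this.1 with h | h
      · exact List.mem_append_left _ h
      · exact List.mem_append_right _ h
    have hlen : c.edges.length ≤ (p.edges ++ q.edges).length :=
      (hnodup.subperm hsub2).length_le
    rw [List.length_append, p.length_edges, q.length_edges, c.length_edges] at hlen
    omega
  omega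

/-- A "chord" from the endpoint of a short path back into its support must be the last edge. -/
lemma chord_mem_edges {H : SimpleGraph V} {k : ℕ} (hk : 1 ≤ k)
    (hg : ∀ (v : V) (c : H.Walk v v), c.IsCycle → 2 * k + 1 ≤ c.length)
    {v w x : V} {p : H.Walk v w} (hp : p.IsPath) (hlen : p.length ≤ k)
    (hx : x ∈ p.support) (hadj : H.Adj w x) : s(x, w) ∈ p.edges := by
  by_contra hne
  set q := p.dropUntil x hx with hq
  have hqp : q.IsPath := hp.dropUntil hx
  have hqe : s(w, x) ∉ q.edges := by
    intro h
    exact hne (by rw [Sym2.eq_swap]; exact p.edges_dropUntil_subset hx h)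
  have hcyc : (SimpleGraph.Walk.cons hadj q).IsCycle :=
    (SimpleGraph.Walk.cons_isCycle_iff q hadj).2 ⟨hqp, hqe⟩
  have h1 := hg w _ hcyc
  rw [SimpleGraph.Walk.length_cons] at h1
  have h2 := p.length_dropUntil_le hx
  rw [← hq] at h2
  omega

/-- Counting extension vertices: at least `d - 1` ways to extend a short path inside `T`. -/
lemma ext_card {H : SimpleGraph V} [DecidableRel H.Adj] {k : ℕ} (hk : 1 ≤ k)
    (hg : ∀ (v : V) (c : H.Walk v v), c.IsCycle → 2 * k + 1 ≤ c.length)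
    (T : Finset V) {v w : V} {p : H.Walk v w} (hp : p.IsPath) (hlen : p.length ≤ k)
    {d : ℕ} (hd : d ≤ (T.filter (H.Adj w)).card) :
    d - 1 ≤ (T.filter (fun x => H.Adj w x ∧ x ∉ p.support)).card := by
  classical
  set A := T.filter (H.Adj w) with hA
  set B := T.filter (fun x => H.Adj w x ∧ x ∉ p.support) with hB
  have hBA : B ⊆ A := by
    intro x hxB
    rw [hB, Finset.mem_filter] at hxB
    rw [hA, Finset.mem_filter]
    exact ⟨hxB.1, hxB.2.1⟩
  have h1 : (A \ B).card ≤ 1 := by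
    apply Finset.card_le_one.2
    intro a ha b hb
    rw [Finset.mem_sdiff, hA, hB, Finset.mem_filter, Finset.mem_filter] at ha hb
    have hsa : a ∈ p.support := by
      by_contra hns
      exact ha.2 ⟨ha.1.1, ha.1.2, hns⟩
    have hsb : b ∈ p.support := by
      by_contra hns
      exact hb.2 ⟨hb.1.1, hb.1.2, hns⟩
    exact unique_edge_at_end p hp
      (chord_mem_edges hk hg hp hlen hsa ha.1.2)
      (chord_mem_edges hk hg hp hlen hsb hb.1.2)
  have h2 : A.card ≤ (A \ B).card + B.card := by
    rw [Finset.card_sdiff_add_card, Finset.union_eq_left.2 hBA]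
  omega

variable [Fintype V]

/-- Edges of `H` with both endpoints in `S`. -/
def inEdges (H : SimpleGraph V) [DecidableRel H.Adj] (S : Finset V) : Finset (Sym2 V) :=
  H.edgeFinset.filter (fun e => ∀ x ∈ e, x ∈ S)

/-- Minimum-degree subgraph extraction. -/
lemma exists_min_degree_subset (H : SimpleGraph V) [DecidableRel H.Adj] (d : ℕ) :
    ∀ (N : ℕ) (S : Finset V), S.card ≤ N → (d - 1) * S.card < (inEdges H S).card →
      ∃ T : Finset V, T.Nonempty ∧ ∀ w ∈ T, d ≤ (T.filter (H.Adj w)).card := by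
  intro N
  induction N with
  | zero =>
    intro S hS h
    exfalso
    rw [Nat.le_zero, Finset.card_eq_zero] at hS
    subst hS
    have : (inEdges H (∅ : Finset V)).card = 0 := by
      rw [Finset.card_eq_zero]
      rw [Finset.eq_empty_iff_forall_notMem]
      intro e he
      rw [inEdges, Finset.mem_filter] at he
      induction e using Sym2.ind with
      | _ a b => exact absurd (he.2 a (Sym2.mem_mk_left a b)) (Finset.notMem_empty a)
    omega
  | succ N ih =>
    intro S hS h
    by_cases hall : ∀ w ∈ S, d ≤ (S.filter (H.Adj w)).card
    · refine ⟨S, ?_, hall⟩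
      have : (inEdges H S).Nonempty := by
        rw [← Finset.card_pos]; omega
      obtain ⟨e, he⟩ := this
      rw [inEdges, Finset.mem_filter] at he
      induction e using Sym2.ind with
      | _ a b => exact ⟨a, he.2 a (Sym2.mem_mk_left a b)⟩
    · push_neg at hall
      obtain ⟨w₀, hw₀S, hw₀⟩ := hall
      set S' := S.erase w₀ with hS'
      have hsub : inEdges H S ⊆ inEdges H S' ∪ (S.filter (H.Adj w₀)).image (fun x => s(w₀, x)) := by
        intro e he
        rw [inEdges, Finset.mem_filter] at he
        induction e using Sym2.ind with
        | _ a b =>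
          have hadj : H.Adj a b := (H.mem_edgeFinset).1 he.1
          have haS : a ∈ S := he.2 a (Sym2.mem_mk_left a b)
          have hbS : b ∈ S := he.2 b (Sym2.mem_mk_right a b)
          rw [Finset.mem_union]
          by_cases hwa : w₀ = a
          · subst hwa
            right
            exact Finset.mem_image.2 ⟨b, Finset.mem_filter.2 ⟨hbS, hadj⟩, rfl⟩
          · by_cases hwb : w₀ = b
            · subst hwb
              right
              refine Finset.mem_image.2 ⟨a, Finset.mem_filter.2 ⟨haS, hadj.symm⟩, ?_⟩
              rw [Sym2.eq_swap]
            · left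
              rw [inEdges, Finset.mem_filter]
              refine ⟨he.1, ?_⟩
              intro x hx
              rcases Sym2.mem_iff.1 hx with rfl | rfl
              · exact Finset.mem_erase.2 ⟨Ne.symm hwa, haS⟩
              · exact Finset.mem_erase.2 ⟨Ne.symm hwb, hbS⟩
      have hcard1 : (inEdges H S).card ≤ (inEdges H S').card + (S.filter (H.Adj w₀)).card := by
        calc (inEdges H S).card
            ≤ (inEdges H S' ∪ (S.filter (H.Adj w₀)).image (fun x => s(w₀, x))).card :=
              Finset.card_le_card hsub
          _ ≤ (inEdges H S').card + ((S.filter (H.Adj w₀)).image (fun x => s(w₀, x))).card :=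
              Finset.card_union_le _ _
          _ ≤ (inEdges H S').card + (S.filter (H.Adj w₀)).card := by
              have := Finset.card_image_le (s := S.filter (H.Adj w₀)) (f := fun x => s(w₀, x))
              omega
      have hScard : S.card = S'.card + 1 := by
        rw [hS']
        rw [← Finset.card_erase_add_one hw₀S]
      have hmul : (d - 1) * S.card = (d - 1) * S'.card + (d - 1) := by
        rw [hScard, Nat.mul_add, Nat.mul_one]
      apply ih S'
      · omega
      · omega

/-- The finset of paths of length `j` from `v` to `w` with support inside `T`. -/
def pathsF (H : SimpleGraph V) [DecidableRel H.Adj] (T : Finset V) (v : V) (j : ℕ) (w : V) :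
    Finset (H.Walk v w) :=
  (H.finsetWalkLength j v w).filter (fun p => p.IsPath ∧ ∀ x ∈ p.support, x ∈ T)

/-- Drop the last edge of a walk, recording the new endpoint. -/
def dropLastPair {H : SimpleGraph V} {u v : V} (q : H.Walk u v) : (w : V) × H.Walk u w :=
  q.concatRec (motive := fun u v _ => (w : V) × H.Walk u w)
    (fun {u} => ⟨u, SimpleGraph.Walk.nil⟩) (fun {_ v _} p _ _ => ⟨v, p⟩)

@[simp] lemma dropLastPair_concat {H : SimpleGraph V} {u v w : V} (p : H.Walk u v)
    (h : H.Adj v w) : dropLastPair (p.concat h) = ⟨v, p⟩ := by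
  rw [dropLastPair, SimpleGraph.Walk.concatRec_concat]

lemma isPath_concat {H : SimpleGraph V} {u v w : V} {p : H.Walk u v} (hp : p.IsPath)
    (h : H.Adj v w) (hw : w ∉ p.support) : (p.concat h).IsPath := by
  rw [← SimpleGraph.Walk.isPath_reverse_iff, SimpleGraph.Walk.reverse_concat,
    SimpleGraph.Walk.cons_isPath_iff, SimpleGraph.Walk.isPath_reverse_iff,
    SimpleGraph.Walk.support_reverse]
  exact ⟨hp, fun hmem => hw (List.mem_reverse.1 hmem)⟩

/-- One growth step for path counts. -/
lemma count_step {H : SimpleGraph V} [DecidableRel H.Adj] {k d : ℕ} (hk : 1 ≤ k)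
    (hg : ∀ (v : V) (c : H.Walk v v), c.IsCycle → 2 * k + 1 ≤ c.length)
    (T : Finset V) (hT : ∀ w ∈ T, d ≤ (T.filter (H.Adj w)).card) (v : V) {j : ℕ} (hj : j < k) :
    (d - 1) * (∑ w, (pathsF H T v j w).card) ≤ ∑ w, (pathsF H T v (j + 1) w).card := by
  classical
  have key : ∀ x ∈ T,
      ∑ w, ((pathsF H T v j w).filter (fun p => H.Adj w x ∧ x ∉ p.support)).card ≤
        (pathsF H T v (j + 1) x).card := by
    intro x hxT
    rw [← Finset.card_sigma]
    apply Finset.card_le_card_of_surjOn (fun q => dropLastPair q)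
    intro z hz
    rw [Finset.mem_coe, Finset.mem_sigma] at hz
    obtain ⟨w, p⟩ := z
    rw [Finset.mem_filter] at hz
    obtain ⟨hpmem, hadj, hxs⟩ := hz.2
    rw [pathsF, Finset.mem_filter] at hpmem
    obtain ⟨hplen, hppath, hpsupp⟩ := hpmem
    rw [SimpleGraph.mem_finsetWalkLength_iff] at hplen
    refine ⟨p.concat hadj, ?_, ?_⟩
    · rw [Finset.mem_coe, pathsF, Finset.mem_filter, SimpleGraph.mem_finsetWalkLength_iff]
      refine ⟨?_, isPath_concat hppath hadj hxs, ?_⟩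
      · rw [SimpleGraph.Walk.length_concat, hplen]
      · intro y hy
        rw [SimpleGraph.Walk.support_concat, List.mem_append] at hy
        rcases hy with hy | hy
        · exact hpsupp y hy
        · rw [List.mem_singleton] at hy
          exact hy ▸ hxT
    · exact dropLastPair_concat p hadj
  have perpath : ∀ (w : V), w ∈ T → ∀ p ∈ pathsF H T v j w,
      d - 1 ≤ (T.filter (fun x => H.Adj w x ∧ x ∉ p.support)).card := by
    intro w hwT p hp
    rw [pathsF, Finset.mem_filter, SimpleGraph.mem_finsetWalkLength_iff] at hp
    exact ext_card hk hg T hp.2.1 (by omega) (hT w hwT)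
  calc (d - 1) * (∑ w, (pathsF H T v j w).card)
      = ∑ w, (d - 1) * (pathsF H T v j w).card := by rw [Finset.mul_sum]
    _ ≤ ∑ w, ∑ p ∈ pathsF H T v j w,
          (T.filter (fun x => H.Adj w x ∧ x ∉ p.support)).card := by
        apply Finset.sum_le_sum
        intro w _
        by_cases hwT : w ∈ T
        · calc (d - 1) * (pathsF H T v j w).card
              = ∑ _p ∈ pathsF H T v j w, (d - 1) := by
                rw [Finset.sum_const, smul_eq_mul, mul_comm]
            _ ≤ ∑ p ∈ pathsF H T v j w,
                  (T.filter (fun x => H.Adj w x ∧ x ∉ p.support)).card :=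
                Finset.sum_le_sum (fun p hp => perpath w hwT p hp)
        · have : pathsF H T v j w = ∅ := by
            rw [Finset.eq_empty_iff_forall_notMem]
            intro p hp
            rw [pathsF, Finset.mem_filter] at hp
            exact hwT (hp.2.2 w p.end_mem_support)
          simp [this]
    _ = ∑ w, ∑ p ∈ pathsF H T v j w, ∑ x ∈ T,
          (if H.Adj w x ∧ x ∉ p.support then 1 else 0) := by
        apply Finset.sum_congr rfl
        intro w _
        apply Finset.sum_congr rfl
        intro p _
        rw [Finset.card_filter]
    _ = ∑ x ∈ T, ∑ w, ∑ p ∈ pathsF H T v j w,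
          (if H.Adj w x ∧ x ∉ p.support then 1 else 0) := by
        rw [Finset.sum_comm]
        apply Finset.sum_congr rfl
        intro w _
        rw [Finset.sum_comm]
    _ = ∑ x ∈ T, ∑ w, ((pathsF H T v j w).filter (fun p => H.Adj w x ∧ x ∉ p.support)).card := by
        apply Finset.sum_congr rfl
        intro x _
        apply Finset.sum_congr rfl
        intro w _
        rw [Finset.card_filter]
    _ ≤ ∑ x ∈ T, (pathsF H T v (j + 1) x).card := Finset.sum_le_sum key
    _ ≤ ∑ x, (pathsF H T v (j + 1) x).card :=
        Finset.sum_le_sum_of_subset (Finset.subset_univ T)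

/-- Main counting lemma: `(d-1)^k ≤ n`. -/
lemma pow_le_card {H : SimpleGraph V} [DecidableRel H.Adj] {k d : ℕ} (hk : 1 ≤ k)
    (hg : ∀ (v : V) (c : H.Walk v v), c.IsCycle → 2 * k + 1 ≤ c.length)
    (T : Finset V) (hT : ∀ w ∈ T, d ≤ (T.filter (H.Adj w)).card)
    {v : V} (hv : v ∈ T) : (d - 1) ^ k ≤ Fintype.card V := by
  classical
  have step : ∀ j, j ≤ k → (d - 1) ^ j ≤ ∑ w, (pathsF H T v j w).card := by
    intro j
    induction j with
    | zero =>
      intro _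
      have hmem : (SimpleGraph.Walk.nil : H.Walk v v) ∈ pathsF H T v 0 v := by
        rw [pathsF, Finset.mem_filter, SimpleGraph.mem_finsetWalkLength_iff]
        refine ⟨rfl, SimpleGraph.Walk.IsPath.nil, ?_⟩
        intro x hx
        rw [SimpleGraph.Walk.support_nil, List.mem_singleton] at hx
        exact hx ▸ hv
      have h1 : 1 ≤ (pathsF H T v 0 v).card := Finset.card_pos.2 ⟨_, hmem⟩
      calc (d - 1) ^ 0 = 1 := pow_zero _
        _ ≤ (pathsF H T v 0 v).card := h1
        _ ≤ ∑ w, (pathsF H T v 0 w).card :=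
            Finset.single_le_sum (f := fun w => (pathsF H T v 0 w).card)
              (fun _ _ => Nat.zero_le _) (Finset.mem_univ v)
    | succ j ih =>
      intro hjk
      calc (d - 1) ^ (j + 1) = (d - 1) * (d - 1) ^ j := by ring
        _ ≤ (d - 1) * (∑ w, (pathsF H T v j w).card) :=
            Nat.mul_le_mul_left _ (ih (by omega))
        _ ≤ ∑ w, (pathsF H T v (j + 1) w).card := count_step hk hg T hT v (by omega)
  have upper : ∑ w, (pathsF H T v k w).card ≤ Fintype.card V := by
    calc ∑ w, (pathsF H T v k w).card ≤ ∑ _w : V, 1 := by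
          apply Finset.sum_le_sum
          intro w _
          apply Finset.card_le_one.2
          intro p hp q hq
          rw [pathsF, Finset.mem_filter, SimpleGraph.mem_finsetWalkLength_iff] at hp hq
          exact path_eq_of_short hg hp.2.1 hq.2.1 (le_of_eq hp.1) (le_of_eq hq.1)
      _ = Fintype.card V := by rw [Finset.sum_const, smul_eq_mul, mul_one, Finset.card_univ]
  exact le_trans (step k le_rfl) upper

end MooreAux

/-- a graph on `n` vertices with girth exceeding `2k` (every cycle has length
at least `2k + 1`) has at most `n^{1+1/k} + n` edges. -/
theorem moore_bound {V : Type*} [Fintype V] (n : ℕ) (hn : Fintype.card V = n)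
    (k : ℕ) (hk : 1 ≤ k) (H : SimpleGraph V)
    (hgirth : ∀ (v : V) (c : H.Walk v v), c.IsCycle → 2 * k + 1 ≤ c.length) :
    (H.edgeSet.ncard : ℝ) ≤ (n : ℝ) ^ (1 + 1 / (k : ℝ)) + n := by
  classical
  have hncard : H.edgeSet.ncard = H.edgeFinset.card := by
    rw [← SimpleGraph.coe_edgeFinset, Set.ncard_coe_finset]
  rcases Nat.eq_zero_or_pos n with hn0 | hnpos
  · subst hn0
    have hV : IsEmpty V := by
      rw [← Fintype.card_eq_zero_iff, hn]
    have : H.edgeFinset.card = 0 := by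
      rw [Finset.card_eq_zero, Finset.eq_empty_iff_forall_notMem]
      intro e he
      induction e using Sym2.ind with
      | _ a b => exact hV.elim a
    rw [hncard, this]
    have : ((0 : ℕ) : ℝ) ^ (1 + 1 / (k : ℝ)) = 0 := by
      rw [Nat.cast_zero]
      apply Real.zero_rpow
      have : (0 : ℝ) < 1 + 1 / (k : ℝ) := by positivity
      linarith
    rw [this]
    simp
  · by_contra hlt
    push_neg at hlt
    set m := H.edgeFinset.card with hm
    rw [hncard] at hlt
    have hkR : (0 : ℝ) < (k : ℝ) := by exact_mod_cast hk
    have hnR : (0 : ℝ) < (n : ℝ) := by exact_mod_cast hnpos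
    set b := ⌊(n : ℝ) ^ ((1 : ℝ) / (k : ℝ))⌋₊ with hb
    set d := b + 2 with hd
    -- (d-1) * n < m
    have hdn : (d - 1) * n < m := by
      have h1 : ((d - 1 : ℕ) : ℝ) * n ≤ ((n : ℝ) ^ ((1 : ℝ) / (k : ℝ)) + 1) * n := by
        apply mul_le_mul_of_nonneg_right _ (le_of_lt hnR)
        have : ((d - 1 : ℕ) : ℝ) = (b : ℝ) + 1 := by
          rw [hd]; push_cast [Nat.add_sub_cancel]; ring
        rw [this]
        have := Nat.floor_le (Real.rpow_nonneg (le_of_lt hnR) ((1 : ℝ) / (k : ℝ)))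
        linarith
      have h2 : ((n : ℝ) ^ ((1 : ℝ) / (k : ℝ)) + 1) * n = (n : ℝ) ^ (1 + 1 / (k : ℝ)) + n := by
        have : (n : ℝ) ^ (1 + 1 / (k : ℝ)) = (n : ℝ) ^ (1 : ℝ) * (n : ℝ) ^ ((1 : ℝ) / (k : ℝ)) := by
          rw [← Real.rpow_add hnR]
        rw [this, Real.rpow_one]
        ring
      have : ((d - 1 : ℕ) : ℝ) * n < m := by
        rw [h2] at h1
        linarith
      exact_mod_cast this
    -- extract min-degree-d subset
    have hext : ∃ T : Finset V, T.Nonempty ∧ ∀ w ∈ T, d ≤ (T.filter (H.Adj w)).card := by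
      apply MooreAux.exists_min_degree_subset H d (Finset.univ.card) Finset.univ le_rfl
      have : MooreAux.inEdges H Finset.univ = H.edgeFinset := by
        rw [MooreAux.inEdges, Finset.filter_true_of_mem]
        intro e _
        intro x _
        exact Finset.mem_univ x
      rw [this, Finset.card_univ, hn]
      exact hdn
    obtain ⟨T, ⟨v, hv⟩, hT⟩ := hext
    have hpow : (d - 1) ^ k ≤ Fintype.card V :=
      MooreAux.pow_le_card hk hgirth T hT hv
    rw [hn] at hpow
    -- but (d-1)^k = (b+1)^k > n
    have hb1 : (n : ℝ) ^ ((1 : ℝ) / (k : ℝ)) < (b : ℝ) + 1 := Nat.lt_floor_add_one _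
    have hnlt : (n : ℝ) < ((b + 1 : ℕ) : ℝ) ^ k := by
      have hrw : (n : ℝ) = ((n : ℝ) ^ ((1 : ℝ) / (k : ℝ))) ^ k := by
        rw [← Real.rpow_natCast ((n : ℝ) ^ ((1 : ℝ) / (k : ℝ))) k,
          ← Real.rpow_mul (le_of_lt hnR)]
        rw [one_div, inv_mul_cancel₀ (ne_of_gt hkR), Real.rpow_one]
      rw [hrw]
      have hlt' : ((n : ℝ) ^ ((1 : ℝ) / (k : ℝ))) ^ k < ((b : ℝ) + 1) ^ k := by
        apply pow_lt_pow_left₀ hb1 (Real.rpow_nonneg (le_of_lt hnR) _)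
        omega
      have : ((b + 1 : ℕ) : ℝ) = (b : ℝ) + 1 := by push_cast; ring
      rw [this]
      exact hlt'
    have hnlt' : n < (b + 1) ^ k := by exact_mod_cast hnlt
    have : d - 1 = b + 1 := by omega
    rw [this] at hpow
    omega
end

section
/- Let k ≥ 1 be a natural number, let L be a list of unordered pairs of vertices of a finite vertex type V, let H = greedy(k, L), and let L₁ be the subsequence of L consisting of exactly those entries of L that are edges of H (taken in the order they appear in L). Then greedy(k, L₁) = H; in particular, when greedy(k, ·) processes L₁, every entry of L₁ is added as an edge. -/
/-- The subsequence of `L` consisting of exactly those entries that are edges of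
`greedy k L`, in the order they appear in `L`. -/
noncomputable def greedyKept {V : Type*} (k : ℕ) (L : List (Sym2 V)) : List (Sym2 V) :=
  L.filter (fun e => @decide (e ∈ (greedy k L).edgeSet) (Classical.propDecidable _))

noncomputable def gstep {V : Type*} (k : ℕ) : SimpleGraph V → Sym2 V → SimpleGraph V :=
  fun H e => if (2 * k : ℕ∞) ≤ Sym2.lift ⟨H.edist, fun _ _ => H.edist_comm⟩ e
    then H ⊔ SimpleGraph.fromEdgeSet {e} else H

lemma greedy_eq_foldl {V : Type*} (k : ℕ) (L : List (Sym2 V)) :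
    greedy k L = L.foldl (gstep k) ⊥ := rfl

lemma le_gstep {V : Type*} (k : ℕ) (H : SimpleGraph V) (e : Sym2 V) : H ≤ gstep k H e := by
  unfold gstep
  split
  · exact le_sup_left
  · exact le_rfl

lemma le_foldl_gstep {V : Type*} (k : ℕ) (L : List (Sym2 V)) :
    ∀ H : SimpleGraph V, H ≤ L.foldl (gstep k) H := by
  induction L with
  | nil => intro H; simp
  | cons e L IH =>
    intro H
    exact (le_gstep k H e).trans (IH _)

lemma mem_gstep {V : Type*} {k : ℕ} (hk : 1 ≤ k) {H : SimpleGraph V} {e : Sym2 V}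
    (hcond : (2 * k : ℕ∞) ≤ Sym2.lift ⟨H.edist, fun _ _ => H.edist_comm⟩ e) :
    e ∈ (gstep k H e).edgeSet := by
  unfold gstep
  rw [if_pos hcond]
  induction e using Sym2.ind with
  | _ u v =>
    have hne : u ≠ v := by
      rintro rfl
      change (2 * k : ℕ∞) ≤ H.edist u u at hcond
      rw [SimpleGraph.edist_self] at hcond
      have : (2 * k : ℕ∞) = 0 := le_antisymm hcond zero_le
      simp [hk.trans_eq rfl] at this
      omega
    rw [SimpleGraph.edgeSet_sup, SimpleGraph.edgeSet_fromEdgeSet]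
    right
    exact ⟨rfl, by simp [hne]⟩

lemma key {V : Type*} (k : ℕ) (hk : 1 ≤ k) (G : SimpleGraph V)
    (p : Sym2 V → Bool) (hp : ∀ e, p e = true ↔ e ∈ G.edgeSet) :
    ∀ (P S : List (Sym2 V)) (H : SimpleGraph V),
      (P ++ S).foldl (gstep k) H = G →
      (P.filter p).foldl (gstep k) H = P.foldl (gstep k) H := by
  intro P
  induction P using List.reverseRecOn with
  | nil => intro S H _; simp
  | append_singleton Q e IH =>
    intro S H hG
    have hG' : (Q ++ (e :: S)).foldl (gstep k) H = G := by
      simpa using hG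
    have IH' := IH (e :: S) H hG'
    set H₁ := Q.foldl (gstep k) H with hH₁
    have hfull : (Q ++ [e]).foldl (gstep k) H = gstep k H₁ e := by
      simp [List.foldl_append, hH₁]
    have hle : gstep k H₁ e ≤ G := by
      rw [← hG', List.foldl_append]
      exact le_foldl_gstep k S _ |>.trans_eq (by simp [← hH₁])
    have hfilt : (Q ++ [e]).filter p = Q.filter p ++ if p e then [e] else [] := by
      simp [List.filter_append, List.filter_singleton]
    by_cases hcond : (2 * k : ℕ∞) ≤ Sym2.lift ⟨H₁.edist, fun _ _ => H₁.edist_comm⟩ e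
    · have hmem : e ∈ G.edgeSet :=
        (SimpleGraph.edgeSet_subset_edgeSet.mpr hle) (mem_gstep hk hcond)
      have hpe : p e = true := (hp e).mpr hmem
      rw [hfull, hfilt, hpe, if_pos rfl, List.foldl_append, IH']
      simp
    · have hstep : gstep k H₁ e = H₁ := by unfold gstep; rw [if_neg hcond]
      rw [hfull, hstep, hfilt]
      by_cases hpe : p e = true
      · rw [hpe, if_pos rfl, List.foldl_append, IH']
        simpa using hstep
      · simp only [hpe]
        simpa using IH'

/-- running greedy on the subsequence of entries kept by `greedy k L`
reproduces `greedy k L`; in particular every entry of that subsequence is added as an edge. -/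
theorem greedy_kept_eq {V : Type*} (k : ℕ) (hk : 1 ≤ k) (L : List (Sym2 V)) :
    greedy k (greedyKept k L) = greedy k L ∧
    ∀ e ∈ greedyKept k L, e ∈ (greedy k (greedyKept k L)).edgeSet := by
  have hp : ∀ e : Sym2 V,
      (fun e => @decide (e ∈ (greedy k L).edgeSet) (Classical.propDecidable _)) e = true ↔
        e ∈ (greedy k L).edgeSet := fun e => @decide_eq_true_iff _ (Classical.propDecidable _)
  have h1 : greedy k (greedyKept k L) = greedy k L := by
    rw [greedy_eq_foldl, greedy_eq_foldl, greedyKept]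
    exact key k hk (greedy k L) _ hp L [] ⊥ (by simpa using (greedy_eq_foldl k L).symm)
  refine ⟨h1, fun e he => ?_⟩
  rw [h1]
  rw [greedyKept, List.mem_filter] at he
  exact (hp e).mp he.2
end

section
/- Let G be a simple graph on a finite vertex type V, let B : V → I be an assignment of vertices to buckets (I a finite index type), and let H be a subgraph of G satisfying: (i) every edge {u,v} of G with B(u) = B(v) is an edge of H; (ii) for every vertex v and every bucket i, if v has a neighbor in G lying in bucket i, then H contains an edge {v, c} for some neighbor c of v in G with B(c) = i; and (iii) for every pair of distinct vertices u, u' with B(u) = B(u') that have a common neighbor in G, there exists a common neighbor w of u and u' in G such that both {u, w} and {u', w} are edges of H. Then for every edge {u,v} of G, edist_H(u,v) ≤ 3; consequently, H is a 3-spanner of G. -/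
/-- a subgraph `H` of `G` containing all intra-bucket edges, a partner edge
into every bucket neighborhood, and witness edges for every same-bucket pair with a common
neighbor, has stretch at most `3` on every edge of `G`; consequently `H` is a `3`-spanner
of `G`. -/
theorem bucket_three_spanner {V I : Type*} [Fintype V] [Fintype I]
    (G : SimpleGraph V) (B : V → I) (H : SimpleGraph V) (hHG : H ≤ G)
    (h1 : ∀ u v : V, G.Adj u v → B u = B v → H.Adj u v)
    (h2 : ∀ (v : V) (i : I), (∃ c, G.Adj v c ∧ B c = i) →
      ∃ c, G.Adj v c ∧ B c = i ∧ H.Adj v c)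
    (h3 : ∀ u u' : V, u ≠ u' → B u = B u' → (∃ x, G.Adj u x ∧ G.Adj u' x) →
      ∃ x, G.Adj u x ∧ G.Adj u' x ∧ H.Adj u x ∧ H.Adj u' x) :
    (∀ u v : V, G.Adj u v → H.edist u v ≤ 3) ∧
    (∀ u v : V, H.edist u v ≤ 3 * G.edist u v) := by
  have key : ∀ u v : V, G.Adj u v → H.edist u v ≤ 3 := by
    intro u v huv
    by_cases hb : B u = B v
    · calc H.edist u v ≤ 1 := by
            simpa using SimpleGraph.edist_le ((h1 u v huv hb).toWalk)
        _ ≤ 3 := by norm_num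
    · obtain ⟨c, hGc, hBc, hHc⟩ := h2 u (B v) ⟨v, huv, rfl⟩
      by_cases hcv : c = v
      · rw [hcv] at hHc
        calc H.edist u v ≤ 1 := by simpa using SimpleGraph.edist_le hHc.toWalk
          _ ≤ 3 := by norm_num
      · obtain ⟨x, hGcx, hGvx, hHcx, hHvx⟩ :=
          h3 c v hcv hBc ⟨u, hGc.symm, huv.symm⟩
        have : H.edist u v ≤ ((hHc.toWalk.append hHcx.toWalk).append hHvx.symm.toWalk).length := by
          exact SimpleGraph.edist_le _
        simpa using this
  refine ⟨key, fun u v ↦ ?_⟩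
  rcases eq_or_ne (G.edist u v) ⊤ with h | h
  · rw [h]; exact le_of_le_of_eq le_top (by simp)
  · obtain ⟨p, hp⟩ := G.exists_walk_of_edist_ne_top h
    rw [← hp]
    clear hp h
    induction p with
    | nil => simp
    | cons ha q ih =>
        calc H.edist _ _ ≤ H.edist _ _ + H.edist _ _ := SimpleGraph.edist_triangle
          _ ≤ 3 + 3 * q.length := add_le_add (key _ _ ha) ih
          _ = 3 * (q.length + 1) := by ring
          _ = 3 * (SimpleGraph.Walk.cons ha q).length := by
              rw [SimpleGraph.Walk.length_cons]; push_cast; ring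
end

section
/- Let J and M be finite sets, let R be a finite set equipped with maps job : R → J and mach : R → Finset M, and let x_1, …, x_T be distinct elements of M. For 1 ≤ t ≤ T, define R^t = { r ∈ R : mach(r) ∩ {x_1, …, x_{t−1}} = ∅ } and, for u ∈ J, deg^t(u) = #{ r ∈ R^t : job(r) = u }. Then ∑_{t=1}^{T} ∑_{r ∈ R^t, x_t ∈ mach(r)} 1/deg^t(job(r)) ≤ ∑_{u ∈ J} H(deg^1(u)), where H(d) = ∑_{j=1}^{d} 1/j denotes the d-th harmonic number and all sums are over the reals. -/
/-- charging bound for target loads. Machines `x 0, …, x (T-1)` are deleted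
one at a time; `Rt t` is the set of routines surviving the first `t` deletions and
`deg t u` the number of surviving routines with job `u`. The total target-load charged to
the deleted machines is at most the sum of harmonic numbers `H(deg 0 u)` over jobs `u`. -/
theorem target_load_charging {J M R : Type*} [Fintype J] [Fintype M] [Fintype R]
    [DecidableEq J] [DecidableEq M]
    (job : R → J) (mach : R → Finset M) (T : ℕ) (x : Fin T → M)
    (hx : Function.Injective x) :
    let Rt : ℕ → Finset R := fun t =>
      Finset.univ.filter (fun r => ∀ s : Fin T, (s : ℕ) < t → x s ∉ mach r)
    let deg : ℕ → J → ℕ := fun t u => ((Rt t).filter (fun r => job r = u)).card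
    ∑ t : Fin T, ∑ r ∈ (Rt (t : ℕ)).filter (fun r => x t ∈ mach r),
        (1 : ℝ) / (deg (t : ℕ) (job r))
      ≤ ∑ u : J, ∑ i ∈ Finset.Icc 1 (deg 0 u), (1 : ℝ) / i := by
  intro Rt deg
  classical
  -- the charged count per step and job
  set f : Fin T → J → ℕ := fun t u =>
    (((Rt (t : ℕ)).filter (fun r => x t ∈ mach r)).filter (fun r => job r = u)).card with hf
  -- key counting inequality
  have hkey : ∀ (t : Fin T) (u : J), f t u + deg ((t : ℕ) + 1) u ≤ deg (t : ℕ) u := by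
    intro t u
    have hsub1 : ((Rt (t : ℕ)).filter (fun r => x t ∈ mach r)).filter (fun r => job r = u)
        ⊆ (Rt (t : ℕ)).filter (fun r => job r = u) := by
      intro r hr
      simp only [Finset.mem_filter] at hr ⊢
      exact ⟨hr.1.1, hr.2⟩
    have hsub2 : (Rt ((t : ℕ) + 1)).filter (fun r => job r = u)
        ⊆ (Rt (t : ℕ)).filter (fun r => job r = u) := by
      intro r hr
      simp only [Rt, Finset.mem_filter, Finset.mem_univ, true_and] at hr ⊢
      exact ⟨fun s hs => hr.1 s (Nat.lt_succ_of_lt hs), hr.2⟩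
    have hdisj : Disjoint (((Rt (t : ℕ)).filter (fun r => x t ∈ mach r)).filter (fun r => job r = u))
        ((Rt ((t : ℕ) + 1)).filter (fun r => job r = u)) := by
      rw [Finset.disjoint_left]
      intro r hr1 hr2
      simp only [Rt, Finset.mem_filter, Finset.mem_univ, true_and] at hr1 hr2
      exact hr2.1 t (Nat.lt_succ_self _) hr1.1.2
    calc f t u + deg ((t : ℕ) + 1) u
        = ((((Rt (t : ℕ)).filter (fun r => x t ∈ mach r)).filter (fun r => job r = u)) ∪
            ((Rt ((t : ℕ) + 1)).filter (fun r => job r = u))).card := by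
          rw [Finset.card_union_of_disjoint hdisj]
      _ ≤ deg (t : ℕ) u := by
          apply Finset.card_le_card
          exact Finset.union_subset hsub1 hsub2
  -- per-job harmonic potential
  have hmain : ∀ u : J,
      ∑ t : Fin T, (f t u : ℝ) / (deg (t : ℕ) u)
        ≤ ∑ i ∈ Finset.Icc 1 (deg 0 u), (1 : ℝ) / i := by
    intro u
    set g : ℕ → ℝ := fun n => ∑ i ∈ Finset.Ioc 0 (deg n u), (1 : ℝ) / i with hg
    have hstep : ∀ t : Fin T,
        (f t u : ℝ) / (deg (t : ℕ) u) ≤ g (t : ℕ) - g ((t : ℕ) + 1) := by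
      intro t
      have hle := hkey t u
      have hdd : deg ((t : ℕ) + 1) u ≤ deg (t : ℕ) u := le_trans (Nat.le_add_left _ _) hle
      have hsplit : g ((t : ℕ) + 1) + ∑ i ∈ Finset.Ioc (deg ((t : ℕ) + 1) u) (deg (t : ℕ) u), (1 : ℝ) / i
          = g (t : ℕ) := Finset.sum_Ioc_consecutive _ (Nat.zero_le _) hdd
      have hbound : (f t u : ℝ) / (deg (t : ℕ) u)
          ≤ ∑ i ∈ Finset.Ioc (deg ((t : ℕ) + 1) u) (deg (t : ℕ) u), (1 : ℝ) / i := by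
        by_cases hd : deg (t : ℕ) u = 0
        · have hf0 : f t u = 0 := by omega
          have : (0:ℝ) ≤ ∑ i ∈ Finset.Ioc (deg ((t : ℕ) + 1) u) (deg (t : ℕ) u), (1 : ℝ) / i :=
            Finset.sum_nonneg fun i _ => by positivity
          simpa [hf0] using this
        · have hdpos : 0 < deg (t : ℕ) u := Nat.pos_of_ne_zero hd
          have h1 : ((Finset.Ioc (deg ((t : ℕ)+1) u) (deg (t : ℕ) u)).card) •
                ((1:ℝ)/(deg (t:ℕ) u))
              ≤ ∑ i ∈ Finset.Ioc (deg ((t : ℕ) + 1) u) (deg (t : ℕ) u), (1 : ℝ) / i := by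
            refine Finset.card_nsmul_le_sum _ _ _ (fun i hi => ?_)
            rw [Finset.mem_Ioc] at hi
            apply one_div_le_one_div_of_le
            · exact_mod_cast Nat.lt_of_le_of_lt (Nat.zero_le _) hi.1
            · exact_mod_cast hi.2
          rw [Nat.card_Ioc, nsmul_eq_mul] at h1
          have h2 : (f t u : ℝ) ≤ ((deg (t:ℕ) u - deg ((t:ℕ)+1) u : ℕ) : ℝ) := by
            exact_mod_cast Nat.le_sub_of_add_le hle
          calc (f t u : ℝ) / (deg (t:ℕ) u) = (f t u : ℝ) * (1/(deg (t:ℕ) u)) := by ring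
            _ ≤ ((deg (t:ℕ) u - deg ((t:ℕ)+1) u : ℕ):ℝ) * (1/(deg (t:ℕ) u)) := by
                apply mul_le_mul_of_nonneg_right h2
                positivity
            _ ≤ _ := h1
      linarith [hsplit, hbound]
    calc ∑ t : Fin T, (f t u : ℝ) / (deg (t : ℕ) u)
        ≤ ∑ t : Fin T, (g (t : ℕ) - g ((t : ℕ) + 1)) := Finset.sum_le_sum fun t _ => hstep t
      _ = ∑ t ∈ Finset.range T, (g t - g (t + 1)) :=
          Fin.sum_univ_eq_sum_range (fun n => g n - g (n + 1)) T
      _ = g 0 - g T := Finset.sum_range_sub' _ _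
      _ ≤ g 0 := by
          have : 0 ≤ g T := Finset.sum_nonneg fun i _ => by positivity
          linarith
      _ = ∑ i ∈ Finset.Icc 1 (deg 0 u), (1 : ℝ) / i := by
          rw [hg]
          show (∑ i ∈ Finset.Ioc 0 (deg 0 u), (1:ℝ)/i) = _
          rw [← Finset.Icc_add_one_left_eq_Ioc]
          rfl
  -- reorganize the double sum
  calc ∑ t : Fin T, ∑ r ∈ (Rt (t : ℕ)).filter (fun r => x t ∈ mach r),
          (1 : ℝ) / (deg (t : ℕ) (job r))
      = ∑ t : Fin T, ∑ u : J, (f t u : ℝ) / (deg (t : ℕ) u) := by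
        refine Finset.sum_congr rfl fun t _ => ?_
        rw [← Finset.sum_fiberwise ((Rt (t : ℕ)).filter (fun r => x t ∈ mach r)) job
          (fun r => (1 : ℝ) / (deg (t : ℕ) (job r)))]
        refine Finset.sum_congr rfl fun u _ => ?_
        rw [Finset.sum_congr rfl (fun r hr => by
          rw [(Finset.mem_filter.mp hr).2])]
        rw [Finset.sum_const, nsmul_eq_mul, mul_one_div]
    _ = ∑ u : J, ∑ t : Fin T, (f t u : ℝ) / (deg (t : ℕ) u) := Finset.sum_comm
    _ ≤ ∑ u : J, ∑ i ∈ Finset.Icc 1 (deg 0 u), (1 : ℝ) / i :=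
        Finset.sum_le_sum fun u _ => hmain u
end
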